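/- arXiv:2404.14439 — 3 statements merged into one kernel-verified Lean document; each statement's English description precedes it below -/
import Mathlib

section
/- The type B Stirling numbers of the second kind, defined by the recurrence S_B(n,k) = S_B(n-1,k-1) + (2k+1)·S_B(n-1,k) with S_B(0,k) = δ_{0,k}, count the number of type B set partitions of ⟨n⟩ = {-n,...,-1,0,1,...,n} into 2k+1 blocks in standard form. -/
open Finset Polynomial

/-- The ground set ⟨n⟩ = {-n, ..., -1, 0, 1, ..., n}. -/
noncomputable def angleB (n : ℕ) : Finset ℤ := Finset.Icc (-(n : ℤ)) (n : ℤ)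

/-- An ordered type B (signed) partition of ⟨n⟩ with 2k+1 blocks:
pairwise disjoint nonempty blocks covering ⟨n⟩, with 0 ∈ S₀, S₀ closed under
negation, and S_{2i} = -S_{2i-1} for i ≥ 1. -/
def IsOrderedB (n k : ℕ) (S : Fin (2*k+1) → Finset ℤ) : Prop :=
  (∀ i, (S i).Nonempty) ∧
  (∀ i j, i ≠ j → Disjoint (S i) (S j)) ∧
  (Finset.univ.biUnion S = angleB n) ∧
  ((0 : ℤ) ∈ S 0) ∧
  (∀ x ∈ S 0, -x ∈ S 0) ∧
  (∀ i : ℕ, 1 ≤ i → ∀ h : 2*i < 2*k+1,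
    S ⟨2*i, h⟩ = (S ⟨2*i-1, by omega⟩).image (fun x => -x))

/-- m_j = min |S_j| (0 if the block is empty). -/
def mB {m : ℕ} (S : Fin m → Finset ℤ) (j : Fin m) : ℤ :=
  WithTop.untopD 0 (((S j).image (fun x => |x|)).min)

/-- M_j = max |S_j| (0 if the block is empty). -/
def MB {m : ℕ} (S : Fin m → Finset ℤ) (j : Fin m) : ℤ :=
  WithBot.unbotD 0 (((S j).image (fun x => |x|)).max)

/-- A standard type B partition: ordered, with m_{2i} ∈ S_{2i} for i ≥ 1 and
0 = m₀ < m₂ < m₄ < ... < m_{2k}. -/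
def IsStandardB (n k : ℕ) (S : Fin (2*k+1) → Finset ℤ) : Prop :=
  IsOrderedB n k S ∧
  (∀ i : ℕ, 1 ≤ i → ∀ h : 2*i < 2*k+1, mB S ⟨2*i, h⟩ ∈ S ⟨2*i, h⟩) ∧
  (∀ i : ℕ, ∀ h : 2*(i+1) < 2*k+1, mB S ⟨2*i, by omega⟩ < mB S ⟨2*(i+1), h⟩)

/-- inv ρ: number of pairs (s, S_j) with s ∈ S_i for some i < j and s ≥ m_j. -/
noncomputable def invB {m : ℕ} (S : Fin m → Finset ℤ) : ℕ :=
  {p : ℤ × Fin m | (∃ i < p.2, p.1 ∈ S i) ∧ mB S p.2 ≤ p.1}.ncard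

/-- ros_B = inv. -/
noncomputable def rosB {m : ℕ} (S : Fin m → Finset ℤ) : ℕ := invB S

/-- los_{B'}: pairs (s, S_j) with s ∈ S_i for some i > j and s ≥ m_j. -/
noncomputable def losB' {m : ℕ} (S : Fin m → Finset ℤ) : ℕ :=
  {p : ℤ × Fin m | (∃ i, p.2 < i ∧ p.1 ∈ S i) ∧ mB S p.2 ≤ p.1}.ncard

/-- lob_{B'}: pairs (s, S_j) with s ∈ S_i for some i > j and 0 < s ≤ m_j. -/
noncomputable def lobB' {m : ℕ} (S : Fin m → Finset ℤ) : ℕ :=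
  {p : ℤ × Fin m | (∃ i, p.2 < i ∧ p.1 ∈ S i) ∧ 0 < p.1 ∧ p.1 ≤ mB S p.2}.ncard

/-- rcb_B: pairs (s, S_j) with s ∈ S_i for some i < j and 0 < s ≤ M_j. -/
noncomputable def rcbB {m : ℕ} (S : Fin m → Finset ℤ) : ℕ :=
  {p : ℤ × Fin m | (∃ i < p.2, p.1 ∈ S i) ∧ 0 < p.1 ∧ p.1 ≤ MB S p.2}.ncard

/-- rob_B: pairs (s, S_j) with s ∈ S_i for some i < j and 0 < s ≤ m_j. -/
noncomputable def robB {m : ℕ} (S : Fin m → Finset ℤ) : ℕ :=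
  {p : ℤ × Fin m | (∃ i < p.2, p.1 ∈ S i) ∧ 0 < p.1 ∧ p.1 ≤ mB S p.2}.ncard

/-- rcs_B: pairs (s, S_j) with s ∈ S_i for some i < j and s ≥ M_j. -/
noncomputable def rcsB {m : ℕ} (S : Fin m → Finset ℤ) : ℕ :=
  {p : ℤ × Fin m | (∃ i < p.2, p.1 ∈ S i) ∧ MB S p.2 ≤ p.1}.ncard

/-- Type B Stirling numbers of the second kind. -/
def StirB : ℕ → ℕ → ℕ
  | 0, 0 => 1
  | 0, _+1 => 0
  | n+1, 0 => StirB n 0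
  | n+1, k+1 => StirB n k + (2*(k+1)+1) * StirB n (k+1)

/-- [m] = 1 + q + ... + q^{m-1}. -/
noncomputable def qb (m : ℕ) : Polynomial ℤ := ∑ i ∈ Finset.range m, (Polynomial.X : Polynomial ℤ) ^ i

/-- Type B q-Stirling numbers of the second kind. -/
noncomputable def qStirB : ℕ → ℕ → Polynomial ℤ
  | 0, 0 => 1
  | 0, _+1 => 0
  | n+1, 0 => qStirB n 0
  | n+1, k+1 => qStirB n k + qb (2*(k+1)+1) * qStirB n (k+1)

/-- [2k]!! = [2k][2k-2]⋯[2]. -/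
noncomputable def qdf : ℕ → Polynomial ℤ
  | 0 => 1
  | k+1 => qb (2*(k+1)) * qdf k

/-- The complement map on ⟨n⟩: i ↦ n+1-i for i > 0, -i ↦ -(n+1-i), 0 ↦ 0. -/
def complB (n : ℕ) (x : ℤ) : ℤ :=
  if 0 < x then (n : ℤ) + 1 - x else if x < 0 then -((n : ℤ) + 1) - x else 0

/-- Complement of a partition, blockwise. -/
def complP (n : ℕ) {m : ℕ} (S : Fin m → Finset ℤ) : Fin m → Finset ℤ :=
  fun j => (S j).image (complB n)

/-- The index of the block paired with block i: 0 ↦ 0, 2ℓ-1 ↦ 2ℓ, 2ℓ ↦ 2ℓ-1. -/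
def pairIdx (k : ℕ) (i : Fin (2*k+1)) : Fin (2*k+1) :=
  if i.val = 0 then i
  else if h2 : i.val % 2 = 1 then ⟨i.val + 1, by omega⟩ else ⟨i.val - 1, by omega⟩

/-! ### Auxiliary machinery for stmt0 -/

lemma mem_angleB {n : ℕ} {x : ℤ} : x ∈ angleB n ↔ |x| ≤ (n : ℤ) := by
  simp [angleB, abs_le, and_comm]

/-- The minimum absolute value of a finset of integers. -/
def amin (A : Finset ℤ) : ℤ := WithTop.untopD 0 ((A.image (fun x => |x|)).min)

lemma mB_eq {m : ℕ} (S : Fin m → Finset ℤ) (j : Fin m) : mB S j = amin (S j) := rfl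

lemma amin_eq_min' {A : Finset ℤ} (hA : A.Nonempty) :
    amin A = (A.image (fun x => |x|)).min' (hA.image _) := by
  rw [amin, ← Finset.coe_min' (hA.image _)]
  rfl

lemma exists_amin {A : Finset ℤ} (hA : A.Nonempty) : ∃ a ∈ A, |a| = amin A := by
  rw [amin_eq_min' hA]
  have h := Finset.min'_mem (A.image (fun x => |x|)) (hA.image _)
  simpa using h

lemma amin_le {A : Finset ℤ} {a : ℤ} (ha : a ∈ A) : amin A ≤ |a| := by
  rw [amin_eq_min' ⟨a, ha⟩]
  exact Finset.min'_le _ _ (Finset.mem_image_of_mem _ ha)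

lemma le_amin {A : Finset ℤ} {c : ℤ} (hA : A.Nonempty) (h : ∀ a ∈ A, c ≤ |a|) : c ≤ amin A := by
  obtain ⟨a, ha, he⟩ := exists_amin hA
  exact he ▸ h a ha

lemma amin_nonneg (A : Finset ℤ) : 0 ≤ amin A := by
  rcases A.eq_empty_or_nonempty with rfl | hA
  · simp [amin]
  · exact le_amin hA (fun a _ => abs_nonneg a)

lemma amin_singleton (x : ℤ) : amin {x} = |x| := by
  simp [amin]

lemma amin_union {A B : Finset ℤ} (hA : A.Nonempty) (h : ∀ b ∈ B, amin A ≤ |b|) :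
    amin (A ∪ B) = amin A := by
  refine le_antisymm ?_ (le_amin (hA.mono Finset.subset_union_left) ?_)
  · obtain ⟨a, ha, he⟩ := exists_amin hA
    exact he ▸ amin_le (Finset.mem_union_left _ ha)
  · intro a ha
    rcases Finset.mem_union.1 ha with h1 | h1
    · exact amin_le h1
    · exact h a h1

lemma amin_sdiff {A D : Finset ℤ} {c : ℤ} (hc : 0 < c) (hD : D ⊆ {c, -c})
    (hB : (A \ D).Nonempty) (h : ∀ b ∈ A \ D, |b| < c) :
    amin (A \ D) = amin A := by
  have hA : A.Nonempty := hB.mono (Finset.sdiff_subset)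
  refine le_antisymm ?_ (le_amin hB (fun a ha => amin_le (Finset.sdiff_subset ha)))
  obtain ⟨a, ha, he⟩ := exists_amin hA
  by_cases hd : a ∈ D
  · exfalso
    have : |a| = c := by
      have := hD hd
      simp only [Finset.mem_insert, Finset.mem_singleton] at this
      rcases this with rfl | rfl
      · exact abs_of_pos hc
      · simp; omega
    obtain ⟨b, hb⟩ := hB
    have h1 := amin_le (A := A) (Finset.sdiff_subset hb)
    have := h b hb
    omega
  · exact he ▸ amin_le (Finset.mem_sdiff.2 ⟨ha, hd⟩)

/-! ### pairIdx lemmas -/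

lemma pairIdx_val {k : ℕ} (i : Fin (2*k+1)) :
    (pairIdx k i).val = if i.val = 0 then 0 else if i.val % 2 = 1 then i.val + 1 else i.val - 1 := by
  unfold pairIdx
  split_ifs with h1 h2 <;> simp [h1]

lemma pairIdx_pairIdx {k : ℕ} (i : Fin (2*k+1)) : pairIdx k (pairIdx k i) = i := by
  apply Fin.ext
  rw [pairIdx_val, pairIdx_val]
  have := i.isLt
  split_ifs <;> simp_all <;> omega

lemma pairIdx_eq_iff {k : ℕ} {i j : Fin (2*k+1)} : pairIdx k i = j ↔ i = pairIdx k j := by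
  constructor
  · rintro rfl; rw [pairIdx_pairIdx]
  · rintro rfl; rw [pairIdx_pairIdx]

lemma pairIdx_even {k ℓ : ℕ} (h1 : 1 ≤ ℓ) (h : 2*ℓ < 2*k+1) :
    pairIdx k ⟨2*ℓ, h⟩ = ⟨2*ℓ-1, by omega⟩ := by
  apply Fin.ext
  rw [pairIdx_val]
  split_ifs <;> simp_all <;> omega

lemma pairIdx_odd {k ℓ : ℕ} (h1 : 1 ≤ ℓ) (h : 2*ℓ < 2*k+1) :
    pairIdx k ⟨2*ℓ-1, by omega⟩ = ⟨2*ℓ, h⟩ := by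
  rw [← pairIdx_even h1 h, pairIdx_pairIdx]

lemma pairIdx_zero {k : ℕ} : pairIdx k 0 = 0 := by
  apply Fin.ext
  rw [pairIdx_val]
  simp

/-! ### misc helpers -/

lemma negneg (A : Finset ℤ) : (A.image (fun x => -x)).image (fun x => -x) = A := by
  rw [Finset.image_image]
  simp [Function.comp]

lemma mem_neg_image {A : Finset ℤ} {x : ℤ} : x ∈ A.image (fun t => -t) ↔ -x ∈ A := by
  simp only [Finset.mem_image]
  constructor
  · rintro ⟨a, ha, rfl⟩; simpa using ha
  · intro h; exact ⟨-x, h, by simp⟩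

lemma mem_ite_empty {P : Prop} [Decidable P] {A : Finset ℤ} {x : ℤ} :
    x ∈ (if P then A else ∅) ↔ P ∧ x ∈ A := by split_ifs with h <;> simp [h]

lemma finite_block_sets (n : ℕ) : {A : Finset ℤ | A ⊆ angleB n}.Finite := by
  have : {A : Finset ℤ | A ⊆ angleB n} = ↑(angleB n).powerset := by
    ext A; simp
  rw [this]
  exact (angleB n).powerset.finite_toSet

/-! ### basic facts about ordered/standard partitions -/

lemma block_subset {n k : ℕ} {S : Fin (2*k+1) → Finset ℤ} (h : IsOrderedB n k S)
    (j : Fin (2*k+1)) : S j ⊆ angleB n := by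
  intro x hx
  rw [← h.2.2.1]
  exact Finset.mem_biUnion.2 ⟨j, Finset.mem_univ j, hx⟩

lemma block_abs {n k : ℕ} {S : Fin (2*k+1) → Finset ℤ} (h : IsOrderedB n k S)
    {j : Fin (2*k+1)} {x : ℤ} (hx : x ∈ S j) : |x| ≤ (n : ℤ) :=
  mem_angleB.1 (block_subset h j hx)

lemma block_unique {n k : ℕ} {S : Fin (2*k+1) → Finset ℤ} (h : IsOrderedB n k S)
    {i j : Fin (2*k+1)} {x : ℤ} (hi : x ∈ S i) (hj : x ∈ S j) : i = j := by
  by_contra hne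
  exact Finset.disjoint_left.1 (h.2.1 i j hne) hi hj

lemma mB_chain {m : ℕ} {S : Fin m → Finset ℤ}
    (h3 : ∀ i : ℕ, ∀ h : 2*(i+1) < m, mB S ⟨2*i, by omega⟩ < mB S ⟨2*(i+1), h⟩) :
    ∀ a b : ℕ, ∀ (hab : a < b) (h : 2*b < m), mB S ⟨2*a, by omega⟩ < mB S ⟨2*b, h⟩ := by
  intro a b
  induction b with
  | zero => omega
  | succ b ih =>
    intro hab h
    rcases Nat.lt_or_ge a b with h' | h'
    · exact lt_trans (ih h' (by omega)) (h3 b h)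
    · have : a = b := by omega
      subst this
      exact h3 a h

lemma finite_std (n k : ℕ) : {S : Fin (2*k+1) → Finset ℤ | IsStandardB n k S}.Finite := by
  apply Set.Finite.subset (Set.Finite.pi (fun _ : Fin (2*k+1) => finite_block_sets n))
  intro S hS
  rw [Set.mem_pi]
  intro j _
  exact block_subset hS.1 j

/-! ### insertion maps -/

/-- Insert `n+1` as a new singleton block pair at the end. -/
def insNew (n k : ℕ) (U : Fin (2*k+1) → Finset ℤ) : Fin (2*(k+1)+1) → Finset ℤ :=
  fun j => if h : j.val < 2*k+1 then U ⟨j.val, h⟩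
    else if j.val = 2*k+1 then {-((n:ℤ)+1)} else {((n:ℤ)+1)}

/-- Insert `n+1` into block `i` and `-(n+1)` into the paired block. -/
def insOld (n : ℕ) {k : ℕ} (S : Fin (2*k+1) → Finset ℤ) (i : Fin (2*k+1)) :
    Fin (2*k+1) → Finset ℤ :=
  fun j => S j ∪ (if j = i then {((n:ℤ)+1)} else ∅) ∪ (if j = pairIdx k i then {-((n:ℤ)+1)} else ∅)

lemma insNew_lt {n k : ℕ} {U : Fin (2*k+1) → Finset ℤ} {j : Fin (2*(k+1)+1)}
    (h : j.val < 2*k+1) : insNew n k U j = U ⟨j.val, h⟩ := dif_pos h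

lemma insNew_eq1 {n k : ℕ} {U : Fin (2*k+1) → Finset ℤ} {j : Fin (2*(k+1)+1)}
    (h : j.val = 2*k+1) : insNew n k U j = {-((n:ℤ)+1)} := by
  show (if h' : j.val < 2*k+1 then U ⟨j.val, h'⟩
    else if j.val = 2*k+1 then {-((n:ℤ)+1)} else {((n:ℤ)+1)}) = _
  rw [dif_neg (by omega), if_pos h]

lemma insNew_eq2 {n k : ℕ} {U : Fin (2*k+1) → Finset ℤ} {j : Fin (2*(k+1)+1)}
    (h : j.val = 2*k+2) : insNew n k U j = {((n:ℤ)+1)} := by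
  show (if h' : j.val < 2*k+1 then U ⟨j.val, h'⟩
    else if j.val = 2*k+1 then {-((n:ℤ)+1)} else {((n:ℤ)+1)}) = _
  rw [dif_neg (by omega), if_neg (by omega)]

lemma mem_insOld {n k : ℕ} {S : Fin (2*k+1) → Finset ℤ} {i j : Fin (2*k+1)} {x : ℤ} :
    x ∈ insOld n S i j ↔
      x ∈ S j ∨ (j = i ∧ x = (n:ℤ)+1) ∨ (j = pairIdx k i ∧ x = -((n:ℤ)+1)) := by
  simp only [insOld, Finset.mem_union, mem_ite_empty, Finset.mem_singleton]
  tauto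

lemma insOld_std {n k : ℕ} {S : Fin (2*k+1) → Finset ℤ} (hS : IsStandardB n k S)
    (i : Fin (2*k+1)) : IsStandardB (n+1) k (insOld n S i) := by
  obtain ⟨hord, hmem, hlt⟩ := hS
  have habs : ∀ j, ∀ x ∈ S j, |x| ≤ (n:ℤ) := fun j x hx => block_abs hord hx
  obtain ⟨hne, hdis, hun, h0, hneg, hpair⟩ := hord
  have hbig : ∀ x : ℤ, |x| ≤ (n:ℤ) → x ≠ (n:ℤ)+1 ∧ x ≠ -((n:ℤ)+1) := by
    intro x hx
    rw [abs_le] at hx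
    constructor <;> omega
  have hmBeq : ∀ j, mB (insOld n S i) j = mB S j := by
    intro j
    show amin _ = amin (S j)
    show amin ((S j ∪ _) ∪ _) = amin (S j)
    rw [Finset.union_assoc]
    apply amin_union (hne j)
    intro b hb
    have h1 : amin (S j) ≤ (n:ℤ) := by
      obtain ⟨a, ha, he⟩ := exists_amin (hne j)
      rw [← he]
      exact habs j a ha
    have h2 : b = (n:ℤ)+1 ∨ b = -((n:ℤ)+1) := by
      rcases Finset.mem_union.1 hb with h | h <;>
        rw [mem_ite_empty, Finset.mem_singleton] at h
      · exact Or.inl h.2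
      · exact Or.inr h.2
    rcases h2 with rfl | rfl
    · rw [abs_of_nonneg (by positivity)]; omega
    · rw [abs_neg, abs_of_nonneg (by positivity)]; omega
  refine ⟨⟨?_, ?_, ?_, ?_, ?_, ?_⟩, ?_, ?_⟩
  · intro j
    obtain ⟨x, hx⟩ := hne j
    exact ⟨x, mem_insOld.2 (Or.inl hx)⟩
  · intro a b hab
    rw [Finset.disjoint_left]
    intro x hxa hxb
    rw [mem_insOld] at hxa hxb
    rcases hxa with hA | ⟨rfl, rfl⟩ | ⟨rfl, rfl⟩ <;>
      rcases hxb with hB | ⟨h1, h2⟩ | ⟨h1, h2⟩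
    · exact Finset.disjoint_left.1 (hdis a b hab) hA hB
    · exact (hbig x (habs a x hA)).1 h2
    · exact (hbig x (habs a x hA)).2 h2
    · exact (hbig _ (habs b _ hB)).1 rfl
    · exact hab (h1.symm.trans rfl) |>.elim
    · omega
    · exact (hbig _ (habs b _ hB)).2 rfl
    · omega
    · exact hab (h1.symm.trans rfl) |>.elim
  · ext x
    rw [Finset.mem_biUnion]
    constructor
    · rintro ⟨j, -, hj⟩
      rw [mem_insOld] at hj
      rw [mem_angleB, abs_le]
      push_cast
      rcases hj with h | ⟨-, rfl⟩ | ⟨-, rfl⟩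
      · have := habs j x h; rw [abs_le] at this; constructor <;> omega
      · constructor <;> omega
      · constructor <;> omega
    · intro hx
      rw [mem_angleB, abs_le] at hx
      push_cast at hx
      by_cases h1 : x = (n:ℤ)+1
      · exact ⟨i, Finset.mem_univ _, mem_insOld.2 (Or.inr (Or.inl ⟨rfl, h1⟩))⟩
      by_cases h2 : x = -((n:ℤ)+1)
      · exact ⟨pairIdx k i, Finset.mem_univ _, mem_insOld.2 (Or.inr (Or.inr ⟨rfl, h2⟩))⟩
      · have hx' : x ∈ angleB n := by rw [mem_angleB, abs_le]; constructor <;> omega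
        rw [← hun] at hx'
        obtain ⟨j, -, hj⟩ := Finset.mem_biUnion.1 hx'
        exact ⟨j, Finset.mem_univ _, mem_insOld.2 (Or.inl hj)⟩
  · exact mem_insOld.2 (Or.inl h0)
  · intro x hx
    rw [mem_insOld] at hx ⊢
    rcases hx with h | ⟨h1, rfl⟩ | ⟨h1, rfl⟩
    · exact Or.inl (hneg x h)
    · refine Or.inr (Or.inr ⟨?_, rfl⟩)
      rw [← h1]
      exact pairIdx_zero.symm
    · refine Or.inr (Or.inl ⟨?_, neg_neg _⟩)
      have h3 := pairIdx_eq_iff.1 h1.symm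
      rw [pairIdx_zero] at h3
      exact h3.symm
  · intro ℓ hℓ h
    ext x
    rw [mem_insOld, mem_neg_image, mem_insOld]
    have e1 : x ∈ S ⟨2*ℓ, h⟩ ↔ -x ∈ S ⟨2*ℓ-1, by omega⟩ := by
      rw [hpair ℓ hℓ h, mem_neg_image]
    have e2 : ((⟨2*ℓ, h⟩ : Fin (2*k+1)) = i ∧ x = (n:ℤ)+1) ↔
        ((⟨2*ℓ-1, by omega⟩ : Fin (2*k+1)) = pairIdx k i ∧ -x = -((n:ℤ)+1)) := by
      constructor
      · rintro ⟨rfl, rfl⟩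
        exact ⟨(pairIdx_even hℓ h).symm, rfl⟩
      · rintro ⟨h1, h2⟩
        have h3 := pairIdx_eq_iff.1 h1.symm
        rw [pairIdx_odd hℓ h] at h3
        exact ⟨h3.symm, by omega⟩
    have e3 : ((⟨2*ℓ, h⟩ : Fin (2*k+1)) = pairIdx k i ∧ x = -((n:ℤ)+1)) ↔
        ((⟨2*ℓ-1, by omega⟩ : Fin (2*k+1)) = i ∧ -x = (n:ℤ)+1) := by
      constructor
      · rintro ⟨h1, rfl⟩
        have h3 := pairIdx_eq_iff.1 h1.symm
        rw [pairIdx_even hℓ h] at h3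
        exact ⟨h3.symm, by omega⟩
      · rintro ⟨rfl, h2⟩
        refine ⟨(pairIdx_odd hℓ h).symm, by omega⟩
    rw [e1, e2, e3]
    exact or_congr_right or_comm
  · intro ℓ hℓ h
    have := hmBeq ⟨2*ℓ, h⟩
    rw [this]
    exact mem_insOld.2 (Or.inl (hmem ℓ hℓ h))
  · intro ℓ h
    rw [hmBeq, hmBeq]
    exact hlt ℓ h

lemma insNew_std {n k : ℕ} {U : Fin (2*k+1) → Finset ℤ} (hU : IsStandardB n k U) :
    IsStandardB (n+1) (k+1) (insNew n k U) := by
  obtain ⟨hord, hmem, hlt⟩ := hU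
  have habs : ∀ j, ∀ x ∈ U j, |x| ≤ (n:ℤ) := fun j x hx => block_abs hord hx
  obtain ⟨hne, hdis, hun, h0, hneg, hpair⟩ := hord
  have haminU : ∀ j, amin (U j) ≤ (n:ℤ) := by
    intro j
    obtain ⟨a, ha, he⟩ := exists_amin (hne j)
    rw [← he]
    exact habs j a ha
  have hc : |((n:ℤ)+1)| = (n:ℤ)+1 := abs_of_nonneg (by positivity)
  have hc' : |(-((n:ℤ)+1))| = (n:ℤ)+1 := by rw [abs_neg]; exact hc
  have hclass : ∀ j : Fin (2*(k+1)+1), j.val < 2*k+1 ∨ j.val = 2*k+1 ∨ j.val = 2*k+2 := by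
    intro j
    have := j.isLt
    omega
  refine ⟨⟨?_, ?_, ?_, ?_, ?_, ?_⟩, ?_, ?_⟩
  · intro j
    rcases hclass j with h | h | h
    · rw [insNew_lt h]; exact hne _
    · rw [insNew_eq1 h]; exact ⟨_, Finset.mem_singleton_self _⟩
    · rw [insNew_eq2 h]; exact ⟨_, Finset.mem_singleton_self _⟩
  · intro a b hab
    rw [Finset.disjoint_left]
    intro x hxa hxb
    rcases hclass a with ha | ha | ha <;> rcases hclass b with hb | hb | hb
    · rw [insNew_lt ha] at hxa
      rw [insNew_lt hb] at hxb
      refine Finset.disjoint_left.1 (hdis ⟨a.val, ha⟩ ⟨b.val, hb⟩ ?_) hxa hxb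
      intro he
      apply hab
      rw [Fin.ext_iff] at he ⊢
      exact he
    · rw [insNew_lt ha] at hxa
      rw [insNew_eq1 hb, Finset.mem_singleton] at hxb
      subst hxb
      have := habs _ _ hxa
      rw [hc'] at this
      omega
    · rw [insNew_lt ha] at hxa
      rw [insNew_eq2 hb, Finset.mem_singleton] at hxb
      subst hxb
      have := habs _ _ hxa
      rw [hc] at this
      omega
    · rw [insNew_lt hb] at hxb
      rw [insNew_eq1 ha, Finset.mem_singleton] at hxa
      subst hxa
      have := habs _ _ hxb
      rw [hc'] at this
      omega
    · exact hab (Fin.ext (ha.trans hb.symm))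
    · rw [insNew_eq1 ha, Finset.mem_singleton] at hxa
      rw [insNew_eq2 hb, Finset.mem_singleton] at hxb
      subst hxa
      omega
    · rw [insNew_lt hb] at hxb
      rw [insNew_eq2 ha, Finset.mem_singleton] at hxa
      subst hxa
      have := habs _ _ hxb
      rw [hc] at this
      omega
    · rw [insNew_eq2 ha, Finset.mem_singleton] at hxa
      rw [insNew_eq1 hb, Finset.mem_singleton] at hxb
      subst hxa
      omega
    · exact hab (Fin.ext (ha.trans hb.symm))
  · ext x
    rw [Finset.mem_biUnion, mem_angleB, abs_le]
    push_cast
    constructor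
    · rintro ⟨j, -, hj⟩
      rcases hclass j with h | h | h
      · rw [insNew_lt h] at hj
        have := habs _ _ hj
        rw [abs_le] at this
        constructor <;> omega
      · rw [insNew_eq1 h, Finset.mem_singleton] at hj
        subst hj
        constructor <;> omega
      · rw [insNew_eq2 h, Finset.mem_singleton] at hj
        subst hj
        constructor <;> omega
    · intro hx
      by_cases h1 : x = (n:ℤ)+1
      · refine ⟨⟨2*k+2, by omega⟩, Finset.mem_univ _, ?_⟩
        rw [insNew_eq2 rfl, Finset.mem_singleton]
        exact h1
      by_cases h2 : x = -((n:ℤ)+1)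
      · refine ⟨⟨2*k+1, by omega⟩, Finset.mem_univ _, ?_⟩
        rw [insNew_eq1 rfl, Finset.mem_singleton]
        exact h2
      · have hx' : x ∈ angleB n := by
          rw [mem_angleB, abs_le]
          constructor <;> omega
        rw [← hun] at hx'
        obtain ⟨j, -, hj⟩ := Finset.mem_biUnion.1 hx'
        refine ⟨⟨j.val, by omega⟩, Finset.mem_univ _, ?_⟩
        rw [insNew_lt (show j.val < 2*k+1 from j.isLt)]
        exact hj
  · have h00 : (0 : Fin (2*(k+1)+1)).val < 2*k+1 := by simp
    rw [insNew_lt h00]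
    have e : (⟨(0 : Fin (2*(k+1)+1)).val, h00⟩ : Fin (2*k+1)) = 0 := by
      apply Fin.ext
      simp
    rw [e]
    exact h0
  · intro x hx
    have h00 : (0 : Fin (2*(k+1)+1)).val < 2*k+1 := by simp
    have e0 : (⟨(0 : Fin (2*(k+1)+1)).val, h00⟩ : Fin (2*k+1)) = 0 := by
      apply Fin.ext
      simp
    have he : insNew n k U 0 = U 0 := by rw [insNew_lt h00, e0]
    rw [he] at hx ⊢
    exact hneg x hx
  · intro ℓ hℓ h
    by_cases hcase : ℓ ≤ k
    · have e1 : insNew n k U ⟨2*ℓ, h⟩ = U ⟨2*ℓ, by omega⟩ :=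
        insNew_lt (show 2*ℓ < 2*k+1 by omega)
      have e2 : insNew n k U ⟨2*ℓ-1, by omega⟩ = U ⟨2*ℓ-1, by omega⟩ :=
        insNew_lt (show 2*ℓ-1 < 2*k+1 by omega)
      rw [e1, e2]
      exact hpair ℓ hℓ (by omega)
    · have hℓ1 : ℓ = k+1 := by omega
      subst hℓ1
      have e1 : insNew n k U ⟨2*(k+1), h⟩ = {((n:ℤ)+1)} :=
        insNew_eq2 (show 2*(k+1) = 2*k+2 by omega)
      have e2 : insNew n k U ⟨2*(k+1)-1, by omega⟩ = {-((n:ℤ)+1)} :=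
        insNew_eq1 (show 2*(k+1)-1 = 2*k+1 by omega)
      rw [e1, e2]
      ext y
      simp
  · intro ℓ hℓ h
    simp only [mB_eq]
    by_cases hcase : ℓ ≤ k
    · have e1 : insNew n k U ⟨2*ℓ, h⟩ = U ⟨2*ℓ, by omega⟩ :=
        insNew_lt (show 2*ℓ < 2*k+1 by omega)
      rw [e1]
      exact hmem ℓ hℓ (by omega)
    · have hℓ1 : ℓ = k+1 := by omega
      subst hℓ1
      have e1 : insNew n k U ⟨2*(k+1), h⟩ = {((n:ℤ)+1)} :=
        insNew_eq2 (show 2*(k+1) = 2*k+2 by omega)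
      rw [e1, amin_singleton, hc]
      exact Finset.mem_singleton_self _
  · intro ℓ h
    simp only [mB_eq]
    by_cases hcase : ℓ + 1 ≤ k
    · rw [insNew_lt (show 2*ℓ < 2*k+1 by omega), insNew_lt (show 2*(ℓ+1) < 2*k+1 by omega)]
      exact hlt ℓ (by omega)
    · have hℓ1 : ℓ = k := by omega
      rw [insNew_lt (show 2*ℓ < 2*k+1 by omega),
        insNew_eq2 (show 2*(ℓ+1) = 2*k+2 by omega), amin_singleton, hc]
      exact lt_of_le_of_lt (haminU _) (by omega)

/-- Remove `±(n+1)` from every block. -/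
def delTop (n : ℕ) {m : ℕ} (T : Fin m → Finset ℤ) : Fin m → Finset ℤ :=
  fun j => T j \ {((n:ℤ)+1), -((n:ℤ)+1)}

lemma mem_delTop {n m : ℕ} {T : Fin m → Finset ℤ} {j : Fin m} {x : ℤ} :
    x ∈ delTop n T j ↔ x ∈ T j ∧ x ≠ ((n:ℤ)+1) ∧ x ≠ -((n:ℤ)+1) := by
  simp [delTop, Finset.mem_sdiff, not_or]

lemma surjNew {n k : ℕ} {T : Fin (2*(k+1)+1) → Finset ℤ}
    (hT : IsStandardB (n+1) (k+1) T) (hQ : T ⟨2*k+2, by omega⟩ = {((n:ℤ)+1)}) :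
    ∃ U : Fin (2*k+1) → Finset ℤ, IsStandardB n k U ∧ insNew n k U = T := by
  obtain ⟨hord, hmem, hlt⟩ := hT
  have huniq : ∀ {a b : Fin (2*(k+1)+1)} {x : ℤ}, x ∈ T a → x ∈ T b → a = b :=
    fun ha hb => block_unique hord ha hb
  have habs : ∀ j, ∀ x ∈ T j, |x| ≤ (n:ℤ)+1 := by
    intro j x hx
    have := block_abs hord hx
    push_cast at this
    exact this
  obtain ⟨hne, hdis, hun, h0, hneg, hpair⟩ := hord
  have hQ' : T ⟨2*(k+1), by omega⟩ = {((n:ℤ)+1)} := hQ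
  have hT1 : T ⟨2*k+1, by omega⟩ = {-((n:ℤ)+1)} := by
    have hp := hpair (k+1) (by omega) (by omega)
    have h2 : T ⟨2*(k+1)-1, by omega⟩ = ({((n:ℤ)+1)} : Finset ℤ).image (fun x => -x) := by
      calc T ⟨2*(k+1)-1, by omega⟩
          = ((T ⟨2*(k+1)-1, by omega⟩).image (fun x => -x)).image (fun x => -x) :=
            (negneg _).symm
        _ = (T ⟨2*(k+1), by omega⟩).image (fun x => -x) := by rw [← hp]
        _ = ({((n:ℤ)+1)} : Finset ℤ).image (fun x => -x) := by rw [hQ']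
    have h3 : T ⟨2*(k+1)-1, by omega⟩ = {-((n:ℤ)+1)} := by
      rw [h2]
      simp
    exact h3
  have hclass : ∀ j : Fin (2*(k+1)+1), j.val < 2*k+1 ∨ j.val = 2*k+1 ∨ j.val = 2*k+2 := by
    intro j
    have := j.isLt
    omega
  have hnotin : ∀ (j : Fin (2*(k+1)+1)), j.val < 2*k+1 →
      ((n:ℤ)+1) ∉ T j ∧ (-((n:ℤ)+1)) ∉ T j := by
    intro j hj
    constructor <;> intro hx
    · have he : j = ⟨2*k+2, by omega⟩ :=
        huniq hx (by rw [hQ]; exact Finset.mem_singleton_self _)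
      have hv : j.val = 2*k+2 := congrArg Fin.val he
      omega
    · have he : j = ⟨2*k+1, by omega⟩ :=
        huniq hx (by rw [hT1]; exact Finset.mem_singleton_self _)
      have hv : j.val = 2*k+1 := congrArg Fin.val he
      omega
  refine ⟨fun j => T ⟨j.val, by omega⟩, ⟨⟨?_, ?_, ?_, ?_, ?_, ?_⟩, ?_, ?_⟩, ?_⟩
  · intro j
    exact hne _
  · intro a b hab
    refine hdis ⟨a.val, by omega⟩ ⟨b.val, by omega⟩ ?_
    intro he
    apply hab
    rw [Fin.ext_iff] at he
    exact Fin.ext he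
  · ext x
    rw [Finset.mem_biUnion, mem_angleB]
    constructor
    · rintro ⟨j, -, hj⟩
      have h1 := abs_le.1 (habs _ _ hj)
      have h2 := hnotin ⟨j.val, by omega⟩ j.isLt
      rw [abs_le]
      rcases (em (x = (n:ℤ)+1)) with rfl | hx1
      · exact absurd hj h2.1
      rcases (em (x = -((n:ℤ)+1))) with rfl | hx2
      · exact absurd hj h2.2
      · constructor <;> omega
    · intro hx
      have hx' : x ∈ Finset.univ.biUnion T := by
        rw [hun, mem_angleB]
        have := abs_le.1 hx
        rw [abs_le]
        push_cast
        constructor <;> omega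
      obtain ⟨j, -, hj⟩ := Finset.mem_biUnion.1 hx'
      rcases hclass j with h | h | h
      · refine ⟨⟨j.val, h⟩, Finset.mem_univ _, ?_⟩
        have he : (⟨j.val, by omega⟩ : Fin (2*(k+1)+1)) = j := Fin.ext rfl
        rw [he]
        exact hj
      · exfalso
        have he : j = ⟨2*k+1, by omega⟩ := Fin.ext h
        rw [he, hT1, Finset.mem_singleton] at hj
        subst hj
        have := abs_le.1 hx
        omega
      · exfalso
        have he : j = ⟨2*k+2, by omega⟩ := Fin.ext h
        rw [he, hQ, Finset.mem_singleton] at hj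
        subst hj
        have := abs_le.1 hx
        omega
  · have he : (⟨(0 : Fin (2*k+1)).val, by omega⟩ : Fin (2*(k+1)+1)) = 0 := by
      apply Fin.ext
      simp
    show (0:ℤ) ∈ T ⟨(0 : Fin (2*k+1)).val, by omega⟩
    rw [he]
    exact h0
  · intro x hx
    have he : (⟨(0 : Fin (2*k+1)).val, by omega⟩ : Fin (2*(k+1)+1)) = 0 := by
      apply Fin.ext
      simp
    have hx' : x ∈ T ⟨(0 : Fin (2*k+1)).val, by omega⟩ := hx
    rw [he] at hx'
    show -x ∈ T ⟨(0 : Fin (2*k+1)).val, by omega⟩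
    rw [he]
    exact hneg x hx'
  · intro ℓ hℓ h
    exact hpair ℓ hℓ (by omega)
  · intro ℓ hℓ h
    exact hmem ℓ hℓ (by omega)
  · intro ℓ h
    exact hlt ℓ (by omega)
  · funext j
    rcases hclass j with h | h | h
    · rw [insNew_lt h]
    · rw [insNew_eq1 h, show j = ⟨2*k+1, by omega⟩ from Fin.ext h, hT1]
    · rw [insNew_eq2 h, show j = ⟨2*k+2, by omega⟩ from Fin.ext h, hQ]

lemma surjOld {n k : ℕ} {T : Fin (2*(k+1)+1) → Finset ℤ}
    (hT : IsStandardB (n+1) (k+1) T) (hQ : T ⟨2*k+2, by omega⟩ ≠ {((n:ℤ)+1)}) :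
    ∃ (S : Fin (2*(k+1)+1) → Finset ℤ) (i : Fin (2*(k+1)+1)),
      IsStandardB n (k+1) S ∧ insOld n S i = T := by
  obtain ⟨hord, hmem, hlt⟩ := hT
  have huniq : ∀ {a b : Fin (2*(k+1)+1)} {x : ℤ}, x ∈ T a → x ∈ T b → a = b :=
    fun ha hb => block_unique hord ha hb
  have habs : ∀ j, ∀ x ∈ T j, |x| ≤ (n:ℤ)+1 := by
    intro j x hx
    have := block_abs hord hx
    push_cast at this
    exact this
  obtain ⟨hne, hdis, hun, h0, hneg, hpair⟩ := hord
  have hcmem : ((n:ℤ)+1) ∈ Finset.univ.biUnion T := by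
    rw [hun, mem_angleB, abs_of_nonneg (by positivity : (0:ℤ) ≤ (n:ℤ)+1)]
    push_cast
    omega
  obtain ⟨i, -, hci⟩ := Finset.mem_biUnion.1 hcmem
  have hclass : ∀ j : Fin (2*(k+1)+1), j.val = 0 ∨
      (∃ ℓ, 1 ≤ ℓ ∧ 2*ℓ < 2*(k+1)+1 ∧ j.val = 2*ℓ) ∨
      (∃ ℓ, 1 ≤ ℓ ∧ 2*ℓ < 2*(k+1)+1 ∧ j.val = 2*ℓ-1) := by
    intro j
    have := j.isLt
    rcases Nat.even_or_odd j.val with ⟨m, hm⟩ | ⟨m, hm⟩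
    · by_cases h0' : j.val = 0
      · exact Or.inl h0'
      · exact Or.inr (Or.inl ⟨j.val/2, by omega, by omega, by omega⟩)
    · exact Or.inr (Or.inr ⟨(j.val+1)/2, by omega, by omega, by omega⟩)
  have hpm : (-((n:ℤ)+1)) ∈ T (pairIdx (k+1) i) := by
    rcases hclass i with h | ⟨ℓ, hℓ1, hℓ2, hℓ3⟩ | ⟨ℓ, hℓ1, hℓ2, hℓ3⟩
    · have hi0 : i = 0 := Fin.ext (by simp [h])
      rw [hi0] at hci ⊢
      rw [pairIdx_zero]
      exact hneg _ hci
    · have hie : i = ⟨2*ℓ, hℓ2⟩ := Fin.ext hℓ3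
      have hp := hpair ℓ hℓ1 hℓ2
      rw [hie, pairIdx_even hℓ1 hℓ2]
      rw [hie, hp, mem_neg_image] at hci
      exact hci
    · have hie : i = ⟨2*ℓ-1, by omega⟩ := Fin.ext hℓ3
      have hp := hpair ℓ hℓ1 hℓ2
      rw [hie, pairIdx_odd hℓ1 hℓ2, hp, mem_neg_image, neg_neg]
      rw [hie] at hci
      exact hci
  have hQ' : T ⟨2*(k+1), by omega⟩ ≠ {((n:ℤ)+1)} := hQ
  have htop : amin (T ⟨2*(k+1), by omega⟩) ≤ (n:ℤ) := by
    by_contra hgt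
    push_neg at hgt
    have hmm : amin (T ⟨2*(k+1), by omega⟩) ∈ T ⟨2*(k+1), by omega⟩ :=
      hmem (k+1) (by omega) (by omega)
    obtain ⟨a, ha, he⟩ := exists_amin (hne ⟨2*(k+1), by omega⟩)
    have hub : amin (T ⟨2*(k+1), by omega⟩) ≤ (n:ℤ)+1 := by
      rw [← he]
      exact habs _ a ha
    have heq : amin (T ⟨2*(k+1), by omega⟩) = (n:ℤ)+1 := by omega
    apply hQ'
    apply Finset.eq_singleton_iff_unique_mem.2
    have h5 : ((n:ℤ)+1) ∈ T ⟨2*(k+1), by omega⟩ := by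
      rw [← heq]
      exact hmm
    refine ⟨h5, ?_⟩
    intro x hx
    have hxa : amin (T ⟨2*(k+1), by omega⟩) ≤ |x| := amin_le hx
    rw [heq] at hxa
    have hxb := habs _ x hx
    have hxor : x = ((n:ℤ)+1) ∨ x = -((n:ℤ)+1) := by
      rcases abs_cases x with ⟨h1, h2⟩ | ⟨h1, h2⟩ <;> omega
    rcases hxor with rfl | rfl
    · rfl
    · exfalso
      have hp := hpair (k+1) (by omega) (by omega)
      rw [hp, mem_neg_image, neg_neg] at hx
      have hco := huniq hx h5
      rw [Fin.ext_iff] at hco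
      have hco' : 2*(k+1)-1 = 2*(k+1) := hco
      omega
  have hkey : ∀ ℓ, 1 ≤ ℓ → ∀ h2 : 2*ℓ < 2*(k+1)+1, amin (T ⟨2*ℓ, h2⟩) ≤ (n:ℤ) := by
    intro ℓ hℓ1 h2
    by_cases hℓk : ℓ = k+1
    · subst hℓk
      exact htop
    · have hc2 := mB_chain hlt ℓ (k+1) (by omega) (by omega)
      have hc3 : amin (T ⟨2*ℓ, h2⟩) < amin (T ⟨2*(k+1), by omega⟩) := hc2
      omega
  have hsmall : ∀ j, ∃ x ∈ T j, |x| ≤ (n:ℤ) := by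
    intro j
    rcases hclass j with h | ⟨ℓ, hℓ1, hℓ2, hℓ3⟩ | ⟨ℓ, hℓ1, hℓ2, hℓ3⟩
    · have hj0 : j = 0 := Fin.ext (by simp [h])
      exact ⟨0, by rw [hj0]; exact h0, by simp⟩
    · have hje : j = ⟨2*ℓ, hℓ2⟩ := Fin.ext hℓ3
      refine ⟨amin (T ⟨2*ℓ, hℓ2⟩), ?_, ?_⟩
      · rw [hje]
        exact hmem ℓ hℓ1 hℓ2
      · rw [abs_of_nonneg (amin_nonneg _)]
        exact hkey ℓ hℓ1 hℓ2
    · have hje : j = ⟨2*ℓ-1, by omega⟩ := Fin.ext hℓ3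
      have hp := hpair ℓ hℓ1 hℓ2
      have h5 : -(amin (T ⟨2*ℓ, hℓ2⟩)) ∈ T ⟨2*ℓ-1, by omega⟩ := by
        apply mem_neg_image.1
        rw [← hp]
        exact hmem ℓ hℓ1 hℓ2
      refine ⟨-(amin (T ⟨2*ℓ, hℓ2⟩)), ?_, ?_⟩
      · rw [hje]
        exact h5
      · rw [abs_neg, abs_of_nonneg (amin_nonneg _)]
        exact hkey ℓ hℓ1 hℓ2
  have hS_ne : ∀ j, (delTop n T j).Nonempty := by
    intro j
    obtain ⟨x, hx, hxb⟩ := hsmall j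
    have hxb' := abs_le.1 hxb
    exact ⟨x, mem_delTop.2 ⟨hx, by omega, by omega⟩⟩
  have haminS : ∀ j, amin (delTop n T j) = amin (T j) := by
    intro j
    apply amin_sdiff (c := (n:ℤ)+1) (by positivity) subset_rfl (hS_ne j)
    intro b hb
    have hb' := mem_delTop.1 hb
    have h1 := abs_le.1 (habs j b hb'.1)
    rcases abs_cases b with ⟨h2, h3⟩ | ⟨h2, h3⟩ <;>
      · have := hb'.2.1
        have := hb'.2.2
        omega
  refine ⟨delTop n T, i, ⟨⟨?_, ?_, ?_, ?_, ?_, ?_⟩, ?_, ?_⟩, ?_⟩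
  · exact hS_ne
  · intro a b hab
    exact (hdis a b hab).mono Finset.sdiff_subset Finset.sdiff_subset
  · ext x
    rw [Finset.mem_biUnion, mem_angleB]
    constructor
    · rintro ⟨j, -, hj⟩
      rw [mem_delTop] at hj
      have h1 := abs_le.1 (habs j x hj.1)
      have h2 := hj.2.1
      have h3 := hj.2.2
      rw [abs_le]
      constructor <;> omega
    · intro hx
      have hx1 := abs_le.1 hx
      have hx' : x ∈ Finset.univ.biUnion T := by
        rw [hun, mem_angleB, abs_le]
        push_cast
        constructor <;> omega
      obtain ⟨j, -, hj⟩ := Finset.mem_biUnion.1 hx'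
      exact ⟨j, Finset.mem_univ _, mem_delTop.2 ⟨hj, by omega, by omega⟩⟩
  · exact mem_delTop.2 ⟨h0, by omega, by omega⟩
  · intro x hx
    rw [mem_delTop] at hx ⊢
    refine ⟨hneg x hx.1, ?_, ?_⟩
    · have := hx.2.2
      omega
    · have := hx.2.1
      omega
  · intro ℓ hℓ1 h2
    ext x
    rw [mem_delTop, mem_neg_image, mem_delTop, hpair ℓ hℓ1 h2, mem_neg_image]
    constructor
    · rintro ⟨h1, h2', h3⟩
      exact ⟨h1, by omega, by omega⟩
    · rintro ⟨h1, h2', h3⟩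
      exact ⟨h1, by omega, by omega⟩
  · intro ℓ hℓ1 h2
    have he : mB (delTop n T) ⟨2*ℓ, h2⟩ = amin (T ⟨2*ℓ, h2⟩) := haminS _
    rw [he]
    have h5 : amin (T ⟨2*ℓ, h2⟩) ∈ T ⟨2*ℓ, h2⟩ := hmem ℓ hℓ1 h2
    have h6 := hkey ℓ hℓ1 h2
    have h7 := amin_nonneg (T ⟨2*ℓ, h2⟩)
    exact mem_delTop.2 ⟨h5, by omega, by omega⟩
  · intro ℓ h2
    have he1 : mB (delTop n T) ⟨2*ℓ, by omega⟩ = amin (T ⟨2*ℓ, by omega⟩) := haminS _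
    have he2 : mB (delTop n T) ⟨2*(ℓ+1), h2⟩ = amin (T ⟨2*(ℓ+1), h2⟩) := haminS _
    rw [he1, he2]
    exact hlt ℓ h2
  · funext j
    ext x
    constructor
    · intro hx
      rcases mem_insOld.1 hx with h1 | ⟨rfl, rfl⟩ | ⟨rfl, rfl⟩
      · exact (mem_delTop.1 h1).1
      · exact hci
      · exact hpm
    · intro hx
      apply mem_insOld.2
      by_cases h1 : x = ((n:ℤ)+1)
      · subst h1
        exact Or.inr (Or.inl ⟨huniq hx hci, rfl⟩)
      by_cases h2 : x = -((n:ℤ)+1)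
      · subst h2
        exact Or.inr (Or.inr ⟨huniq hx hpm, rfl⟩)
      · exact Or.inl (mem_delTop.2 ⟨hx, h1, h2⟩)

lemma insOld_notQ {n k : ℕ} {S : Fin (2*(k+1)+1) → Finset ℤ} (hS : IsStandardB n (k+1) S)
    (i : Fin (2*(k+1)+1)) : insOld n S i ⟨2*k+2, by omega⟩ ≠ {((n:ℤ)+1)} := by
  intro he
  obtain ⟨a, ha⟩ := hS.1.1 ⟨2*k+2, by omega⟩
  have h1 : a ∈ insOld n S i ⟨2*k+2, by omega⟩ := mem_insOld.2 (Or.inl ha)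
  rw [he, Finset.mem_singleton] at h1
  subst h1
  have h2 := block_abs hS.1 ha
  rw [abs_of_nonneg (by positivity : (0:ℤ) ≤ (n:ℤ)+1)] at h2
  omega

lemma mem_c_insOld {n k : ℕ} {S : Fin (2*k+1) → Finset ℤ} (hS : IsStandardB n k S)
    {i j : Fin (2*k+1)} : ((n:ℤ)+1) ∈ insOld n S i j ↔ j = i := by
  constructor
  · intro hx
    rcases mem_insOld.1 hx with h1 | ⟨h1, -⟩ | ⟨-, h1⟩
    · exfalso
      have h2 := block_abs hS.1 h1
      rw [abs_of_nonneg (by positivity : (0:ℤ) ≤ (n:ℤ)+1)] at h2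
      omega
    · exact h1
    · omega
  · rintro rfl
    exact mem_insOld.2 (Or.inr (Or.inl ⟨rfl, rfl⟩))

lemma mem_S_of_insOld {n k : ℕ} {S : Fin (2*k+1) → Finset ℤ} (hS : IsStandardB n k S)
    {i j : Fin (2*k+1)} {x : ℤ} :
    x ∈ S j ↔ x ∈ insOld n S i j ∧ x ≠ ((n:ℤ)+1) ∧ x ≠ -((n:ℤ)+1) := by
  constructor
  · intro hx
    have h2 := abs_le.1 (block_abs hS.1 hx)
    exact ⟨mem_insOld.2 (Or.inl hx), by omega, by omega⟩
  · rintro ⟨hx, h1, h2⟩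
    rcases mem_insOld.1 hx with h3 | ⟨-, h3⟩ | ⟨-, h3⟩
    · exact h3
    · exact absurd h3 h1
    · exact absurd h3 h2

lemma step (n k : ℕ) :
    {T : Fin (2*(k+1)+1) → Finset ℤ | IsStandardB (n+1) (k+1) T}.ncard =
      {U : Fin (2*k+1) → Finset ℤ | IsStandardB n k U}.ncard +
      (2*(k+1)+1) * {S : Fin (2*(k+1)+1) → Finset ℤ | IsStandardB n (k+1) S}.ncard := by
  classical
  have hAfin : {T : Fin (2*(k+1)+1) → Finset ℤ | IsStandardB (n+1) (k+1) T}.Finite :=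
    finite_std (n+1) (k+1)
  have hsplit := Set.ncard_inter_add_ncard_diff_eq_ncard
    {T : Fin (2*(k+1)+1) → Finset ℤ | IsStandardB (n+1) (k+1) T}
    {T : Fin (2*(k+1)+1) → Finset ℤ | T ⟨2*k+2, Nat.lt_succ_self (2*k+2)⟩ = {((n:ℤ)+1)}} hAfin
  have h1 : {T : Fin (2*(k+1)+1) → Finset ℤ | IsStandardB (n+1) (k+1) T} ∩
      {T : Fin (2*(k+1)+1) → Finset ℤ | T ⟨2*k+2, Nat.lt_succ_self (2*k+2)⟩ = {((n:ℤ)+1)}} =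
      (insNew n k) '' {U | IsStandardB n k U} := by
    ext T
    constructor
    · rintro ⟨hA, hQm⟩
      obtain ⟨U, hU, hUe⟩ := surjNew hA hQm
      exact ⟨U, hU, hUe⟩
    · rintro ⟨U, hU, rfl⟩
      exact ⟨insNew_std hU, insNew_eq2 rfl⟩
  have h2 : {T : Fin (2*(k+1)+1) → Finset ℤ | IsStandardB (n+1) (k+1) T} \
      {T : Fin (2*(k+1)+1) → Finset ℤ | T ⟨2*k+2, Nat.lt_succ_self (2*k+2)⟩ = {((n:ℤ)+1)}} =
      (fun p : (Fin (2*(k+1)+1) → Finset ℤ) × Fin (2*(k+1)+1) => insOld n p.1 p.2) ''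
        ({S | IsStandardB n (k+1) S} ×ˢ Set.univ) := by
    ext T
    constructor
    · rintro ⟨hA, hQm⟩
      obtain ⟨S, i, hS, hSe⟩ := surjOld hA hQm
      exact ⟨(S, i), ⟨hS, trivial⟩, hSe⟩
    · rintro ⟨⟨S, i⟩, ⟨hS, -⟩, rfl⟩
      exact ⟨insOld_std hS i, insOld_notQ hS i⟩
  have hinjNew : Set.InjOn (insNew n k) {U | IsStandardB n k U} := by
    rintro U - U' - h
    funext j
    have h3 := congrFun h ⟨j.val, Nat.lt_succ_of_lt (Nat.lt_succ_of_lt j.isLt)⟩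
    rw [insNew_lt (show j.val < 2*k+1 from j.isLt),
        insNew_lt (show j.val < 2*k+1 from j.isLt)] at h3
    exact h3
  have hinjOld : Set.InjOn
      (fun p : (Fin (2*(k+1)+1) → Finset ℤ) × Fin (2*(k+1)+1) => insOld n p.1 p.2)
      ({S | IsStandardB n (k+1) S} ×ˢ Set.univ) := by
    rintro ⟨S, i⟩ ⟨hS, -⟩ ⟨S', i'⟩ ⟨hS', -⟩ h
    simp only at h
    have hii : i = i' := by
      have hc1 : ((n:ℤ)+1) ∈ insOld n S i i := (mem_c_insOld hS).2 rfl
      rw [h] at hc1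
      exact (mem_c_insOld hS').1 hc1
    subst hii
    have hSS : S = S' := by
      funext j
      ext x
      rw [mem_S_of_insOld hS (i := i), mem_S_of_insOld hS' (i := i), h]
    rw [hSS]
  rw [h1, h2, Set.ncard_image_of_injOn hinjNew, Set.ncard_image_of_injOn hinjOld] at hsplit
  have hprod : ({S | IsStandardB n (k+1) S} ×ˢ (Set.univ : Set (Fin (2*(k+1)+1)))).ncard =
      (2*(k+1)+1) * {S : Fin (2*(k+1)+1) → Finset ℤ | IsStandardB n (k+1) S}.ncard := by
    rw [← Nat.card_coe_set_eq, Nat.card_congr (Equiv.Set.prod _ _), Nat.card_prod,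
      Nat.card_coe_set_eq, Nat.card_coe_set_eq, Set.ncard_univ, Nat.card_eq_fintype_card,
      Fintype.card_fin, Nat.mul_comm]
  rw [hprod] at hsplit
  exact hsplit.symm

lemma std_k0 (n : ℕ) :
    {S : Fin (2*0+1) → Finset ℤ | IsStandardB n 0 S} = {fun _ => angleB n} := by
  ext S
  simp only [Set.mem_setOf_eq, Set.mem_singleton_iff]
  constructor
  · intro hS
    obtain ⟨⟨hne, hdis, hun, h0, hneg, hpair⟩, -, -⟩ := hS
    funext j
    have hj : j = 0 := by
      apply Fin.ext
      have := j.isLt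
      simp only [Fin.val_zero]
      omega
    rw [hj, ← hun]
    ext x
    rw [Finset.mem_biUnion]
    constructor
    · intro hx
      exact ⟨0, Finset.mem_univ _, hx⟩
    · rintro ⟨j', -, hj'⟩
      have hj'0 : j' = 0 := by
        apply Fin.ext
        have := j'.isLt
        simp only [Fin.val_zero]
        omega
      rwa [hj'0] at hj'
  · rintro rfl
    refine ⟨⟨?_, ?_, ?_, ?_, ?_, ?_⟩, ?_, ?_⟩
    · intro j
      exact ⟨0, mem_angleB.2 (by simp)⟩
    · intro a b hab
      exfalso
      apply hab
      apply Fin.ext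
      have := a.isLt
      have := b.isLt
      omega
    · ext x
      rw [Finset.mem_biUnion]
      constructor
      · rintro ⟨j, -, hj⟩
        exact hj
      · intro hx
        exact ⟨0, Finset.mem_univ _, hx⟩
    · exact mem_angleB.2 (by simp)
    · intro x hx
      rw [mem_angleB] at hx ⊢
      rwa [abs_neg]
    · intro ℓ hℓ h
      exact absurd h (by omega)
    · intro ℓ hℓ h
      exact absurd h (by omega)
    · intro ℓ h
      exact absurd h (by omega)

lemma std_zero_succ (k : ℕ) :
    {S : Fin (2*(k+1)+1) → Finset ℤ | IsStandardB 0 (k+1) S} = ∅ := by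
  ext S
  simp only [Set.mem_setOf_eq, Set.mem_empty_iff_false, iff_false]
  intro hS
  obtain ⟨⟨hne, hdis, hun, h0, hneg, hpair⟩, -, -⟩ := hS
  obtain ⟨x, hx⟩ := hne ⟨1, by omega⟩
  have hx' : x ∈ angleB 0 := by
    rw [← hun]
    exact Finset.mem_biUnion.2 ⟨⟨1, by omega⟩, Finset.mem_univ _, hx⟩
  rw [mem_angleB] at hx'
  have hx0 : x = 0 := by
    have := abs_le.1 hx'
    omega
  subst hx0
  have hne01 : (0 : Fin (2*(k+1)+1)) ≠ ⟨1, by omega⟩ := by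
    intro he
    rw [Fin.ext_iff] at he
    simp only [Fin.val_zero] at he
    exact absurd he (by omega)
  exact Finset.disjoint_left.1 (hdis 0 ⟨1, by omega⟩ hne01) h0 hx

lemma StirB_zero (n : ℕ) : StirB n 0 = 1 := by
  induction n with
  | zero => rfl
  | succ n ih => rw [show StirB (n+1) 0 = StirB n 0 from rfl]; exact ih

/-- S_B(n,k) counts standard type B partitions of ⟨n⟩ with 2k+1 blocks. -/
theorem stmt0 (n k : ℕ) :
    {S : Fin (2*k+1) → Finset ℤ | IsStandardB n k S}.ncard = StirB n k := by
  induction n generalizing k with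
  | zero =>
    cases k with
    | zero =>
      rw [std_k0, Set.ncard_singleton]
      rfl
    | succ k =>
      rw [std_zero_succ, Set.ncard_empty]
      rfl
  | succ n ih =>
    cases k with
    | zero =>
      rw [std_k0, Set.ncard_singleton, StirB_zero]
    | succ k =>
      rw [step n k, ih k, ih (k+1)]
      rfl
end

section
/- For all n, k ≥ 0, the type B q-Stirling number satisfies S_B[n,k] = Σ_{ρ ∈ S_B(⟨n⟩,k)} q^{inv ρ}, where the sum is over standard type B partitions of ⟨n⟩ with 2k+1 blocks. -/
open Finset Polynomial

namespace Stmt2Aux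
open Finset

/-- min of absolute values of a finset of integers -/
def mAbs (T : Finset ℤ) : ℤ := WithTop.untopD 0 ((T.image (fun x => |x|)).min)

lemma mB_eq_mAbs {m : ℕ} (S : Fin m → Finset ℤ) (j : Fin m) : mB S j = mAbs (S j) := rfl

lemma mAbs_of_nonempty {T : Finset ℤ} (h : T.Nonempty) :
    mAbs T = (T.image (fun x => |x|)).min' (h.image _) := by
  unfold mAbs
  rw [← Finset.coe_min' (h.image _), WithTop.untopD_coe]

lemma mAbs_exists {T : Finset ℤ} (h : T.Nonempty) : ∃ x ∈ T, |x| = mAbs T := by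
  rw [mAbs_of_nonempty h]
  have := Finset.min'_mem (T.image (fun x => |x|)) (h.image _)
  obtain ⟨x, hx, hx2⟩ := Finset.mem_image.mp this
  exact ⟨x, hx, hx2⟩

lemma mAbs_le {T : Finset ℤ} {x : ℤ} (hx : x ∈ T) : mAbs T ≤ |x| := by
  rw [mAbs_of_nonempty ⟨x, hx⟩]
  exact Finset.min'_le _ _ (Finset.mem_image_of_mem _ hx)

lemma le_mAbs {T : Finset ℤ} {a : ℤ} (h : T.Nonempty) (ha : ∀ y ∈ T, a ≤ |y|) :
    a ≤ mAbs T := by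
  rw [mAbs_of_nonempty h]
  apply Finset.le_min'
  intro y hy
  obtain ⟨x, hx, rfl⟩ := Finset.mem_image.mp hy
  exact ha x hx

lemma mAbs_nonneg (T : Finset ℤ) : 0 ≤ mAbs T := by
  rcases T.eq_empty_or_nonempty with rfl | h
  · simp [mAbs]
  · exact le_mAbs h fun y _ => abs_nonneg y

lemma mAbs_eq_zero {T : Finset ℤ} (h : (0:ℤ) ∈ T) : mAbs T = 0 :=
  le_antisymm (by simpa using mAbs_le h) (mAbs_nonneg T)

lemma mAbs_singleton (a : ℤ) : mAbs {a} = |a| := by simp [mAbs]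

lemma mAbs_congr {T' T : Finset ℤ} (hsub : T' ⊆ T) (hne : T'.Nonempty)
    (hbig : ∀ x ∈ T, x ∉ T' → mAbs T' ≤ |x|) : mAbs T = mAbs T' := by
  apply le_antisymm
  · obtain ⟨x, hx, hxe⟩ := mAbs_exists hne
    exact hxe ▸ mAbs_le (hsub hx)
  · apply le_mAbs (hne.mono hsub)
    intro y hy
    by_cases hy' : y ∈ T'
    · exact mAbs_le hy'
    · exact hbig y hy hy'

lemma mAbs_image_neg (T : Finset ℤ) : mAbs (T.image (fun x => -x)) = mAbs T := by
  unfold mAbs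
  rw [Finset.image_image]
  simp [Function.comp_def, abs_neg]

lemma mem_angleB_iff {n : ℕ} {x : ℤ} : x ∈ angleB n ↔ |x| ≤ (n : ℤ) := by
  rw [angleB, Finset.mem_Icc, abs_le]

lemma abs_le_of_mem_angleB {n : ℕ} {x : ℤ} (hx : x ∈ angleB n) : |x| ≤ (n : ℤ) :=
  mem_angleB_iff.mp hx

lemma mAbs_le_n {n : ℕ} {T : Finset ℤ} (h : T.Nonempty) (hT : T ⊆ angleB n) :
    mAbs T ≤ (n : ℤ) := by
  obtain ⟨x, hx, hxe⟩ := mAbs_exists h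
  exact hxe ▸ abs_le_of_mem_angleB (hT hx)

end Stmt2Aux

namespace Stmt2Aux
open Finset

def invSet {m : ℕ} (S : Fin m → Finset ℤ) : Set (ℤ × Fin m) :=
  {p : ℤ × Fin m | (∃ i < p.2, p.1 ∈ S i) ∧ mB S p.2 ≤ p.1}

lemma invB_eq_ncard {m : ℕ} (S : Fin m → Finset ℤ) : invB S = (invSet S).ncard := rfl

lemma invSet_finite {m : ℕ} (S : Fin m → Finset ℤ) : (invSet S).Finite := by
  apply Set.Finite.subset
    (Set.Finite.prod (Finset.univ.biUnion S).finite_toSet Set.finite_univ)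
  rintro ⟨s, j⟩ ⟨⟨i, _, hi⟩, -⟩
  exact ⟨by simpa using ⟨i, hi⟩, trivial⟩

/-- The set of standard partitions. -/
def A (n k : ℕ) : Set (Fin (2*k+1) → Finset ℤ) := {S | IsStandardB n k S}

lemma block_subset {n k : ℕ} {S : Fin (2*k+1) → Finset ℤ} (hS : IsStandardB n k S)
    (i : Fin (2*k+1)) : S i ⊆ angleB n := by
  intro x hx
  rw [← hS.1.2.2.1]
  exact Finset.mem_biUnion.mpr ⟨i, Finset.mem_univ _, hx⟩

lemma A_finite (n k : ℕ) : (A n k).Finite := by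
  apply Set.Finite.subset (Set.Finite.pi (fun _ : Fin (2*k+1) =>
    (angleB n).powerset.finite_toSet))
  intro S hS
  rw [Set.mem_pi]
  intro i _
  simpa [Finset.mem_powerset] using block_subset hS i

lemma mB_lt_of_mem_A {n k : ℕ} {S : Fin (2*k+1) → Finset ℤ} (hS : IsStandardB n k S)
    (j : Fin (2*k+1)) : mB S j ≤ (n : ℤ) := by
  rw [mB_eq_mAbs]
  exact mAbs_le_n (hS.1.1 j) (block_subset hS j)

/-- N = n+1 does not belong to any block of a partition of ⟨n⟩. -/
lemma N_not_mem {n k : ℕ} {S : Fin (2*k+1) → Finset ℤ} (hS : IsStandardB n k S)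
    (j : Fin (2*k+1)) : ((n:ℤ)+1) ∉ S j ∧ (-((n:ℤ)+1)) ∉ S j := by
  constructor <;> intro h <;> have := abs_le_of_mem_angleB (block_subset hS j h) <;>
    rw [abs_le] at this <;> omega

end Stmt2Aux

namespace Stmt2Aux
open Finset

/-- Append the singleton pair {-(n+1)}, {n+1} at the end. -/
def extP (n k : ℕ) (S : Fin (2*k+1) → Finset ℤ) : Fin (2*(k+1)+1) → Finset ℤ :=
  fun j => if h : j.val < 2*k+1 then S ⟨j.val, h⟩
    else if j.val = 2*k+1 then {-((n:ℤ)+1)} else {((n:ℤ)+1)}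

/-- Insert n+1 into block i and -(n+1) into the paired block. -/
def insP (n k : ℕ) (i : Fin (2*k+1)) (S : Fin (2*k+1) → Finset ℤ) :
    Fin (2*k+1) → Finset ℤ :=
  fun j => S j ∪ (if j = i then {((n:ℤ)+1)} else ∅) ∪
    (if j = pairIdx k i then {-((n:ℤ)+1)} else ∅)

lemma mem_insP {n k : ℕ} {i : Fin (2*k+1)} {S : Fin (2*k+1) → Finset ℤ}
    {j : Fin (2*k+1)} {x : ℤ} :
    x ∈ insP n k i S j ↔
      x ∈ S j ∨ (j = i ∧ x = (n:ℤ)+1) ∨ (j = pairIdx k i ∧ x = -((n:ℤ)+1)) := by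
  unfold insP
  split_ifs <;> simp_all <;> tauto

lemma subset_insP {n k : ℕ} (i : Fin (2*k+1)) (S : Fin (2*k+1) → Finset ℤ)
    (j : Fin (2*k+1)) : S j ⊆ insP n k i S j :=
  fun x hx => mem_insP.mpr (Or.inl hx)

lemma pairIdx_cases (k : ℕ) (i : Fin (2*k+1)) :
    (i.val = 0 ∧ (pairIdx k i).val = 0) ∨
    (i.val % 2 = 1 ∧ (pairIdx k i).val = i.val + 1) ∨
    (i.val ≠ 0 ∧ i.val % 2 = 0 ∧ (pairIdx k i).val = i.val - 1) := by
  unfold pairIdx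
  split_ifs with h1 h2 <;> simp_all

lemma pairIdx_zero (k : ℕ) : (pairIdx k 0).val = 0 := by
  rcases pairIdx_cases k 0 with ⟨_, h⟩ | ⟨h, _⟩ | ⟨h, _⟩ <;> simp_all

lemma extP_val_lt {n k : ℕ} {S : Fin (2*k+1) → Finset ℤ} {j : Fin (2*(k+1)+1)}
    (h : j.val < 2*k+1) : extP n k S j = S ⟨j.val, h⟩ := dif_pos h

lemma extP_val_eq1 {n k : ℕ} {S : Fin (2*k+1) → Finset ℤ} {j : Fin (2*(k+1)+1)}
    (h : j.val = 2*k+1) : extP n k S j = {-((n:ℤ)+1)} := by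
  unfold extP; rw [dif_neg (by omega), if_pos h]

lemma extP_val_eq2 {n k : ℕ} {S : Fin (2*k+1) → Finset ℤ} {j : Fin (2*(k+1)+1)}
    (h : j.val = 2*k+2) : extP n k S j = {((n:ℤ)+1)} := by
  unfold extP; rw [dif_neg (by omega), if_neg (by omega)]

lemma mB_insP {n k : ℕ} {S : Fin (2*k+1) → Finset ℤ} (hS : IsStandardB n k S)
    (i : Fin (2*k+1)) (j : Fin (2*k+1)) : mB (insP n k i S) j = mB S j := by
  rw [mB_eq_mAbs, mB_eq_mAbs]
  apply mAbs_congr (subset_insP i S j) (hS.1.1 j)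
  intro x hx hx'
  rcases mem_insP.mp hx with h | ⟨_, rfl⟩ | ⟨_, rfl⟩
  · exact absurd h hx'
  · calc mAbs (S j) ≤ (n:ℤ) := mAbs_le_n (hS.1.1 j) (block_subset hS j)
    _ ≤ |(n:ℤ)+1| := by rw [abs_of_nonneg (by positivity)]; omega
  · calc mAbs (S j) ≤ (n:ℤ) := mAbs_le_n (hS.1.1 j) (block_subset hS j)
    _ ≤ |(-((n:ℤ)+1))| := by rw [abs_neg, abs_of_nonneg (by positivity)]; omega

lemma mB_extP_lt {n k : ℕ} {S : Fin (2*k+1) → Finset ℤ} {j : Fin (2*(k+1)+1)}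
    (h : j.val < 2*k+1) : mB (extP n k S) j = mB S ⟨j.val, h⟩ := by
  rw [mB_eq_mAbs, mB_eq_mAbs, extP_val_lt h]

lemma mB_extP_eq1 {n k : ℕ} {S : Fin (2*k+1) → Finset ℤ} {j : Fin (2*(k+1)+1)}
    (h : j.val = 2*k+1) : mB (extP n k S) j = (n:ℤ)+1 := by
  rw [mB_eq_mAbs, extP_val_eq1 h, mAbs_singleton, abs_neg, abs_of_nonneg (by positivity)]

lemma mB_extP_eq2 {n k : ℕ} {S : Fin (2*k+1) → Finset ℤ} {j : Fin (2*(k+1)+1)}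
    (h : j.val = 2*k+2) : mB (extP n k S) j = (n:ℤ)+1 := by
  rw [mB_eq_mAbs, extP_val_eq2 h, mAbs_singleton, abs_of_nonneg (by positivity)]

lemma angleB_mono {n : ℕ} : angleB n ⊆ angleB (n+1) := by
  intro x hx
  rw [mem_angleB_iff] at hx ⊢
  push_cast
  omega

end Stmt2Aux

namespace Stmt2Aux
open Finset

lemma ins_mem_A {n k : ℕ} {S : Fin (2*k+1) → Finset ℤ} (hS : S ∈ A n k)
    (i : Fin (2*k+1)) : insP n k i S ∈ A (n+1) k := by
  have hstd : IsStandardB n k S := hS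
  obtain ⟨⟨hne, hdis, hcov, h0, hneg, hpair⟩, hmem, hmono⟩ := hS
  have hmB : ∀ j, mB (insP n k i S) j = mB S j := mB_insP hstd i
  refine ⟨⟨?_, ?_, ?_, ?_, ?_, ?_⟩, ?_, ?_⟩
  · intro j
    exact (hne j).mono (subset_insP i S j)
  · -- pairwise disjoint
    intro j j' hjj'
    rw [Finset.disjoint_left]
    intro x hx hx'
    rw [mem_insP] at hx hx'
    rcases hx with hx | ⟨rfl, rfl⟩ | ⟨rfl, hxn⟩
    · rcases hx' with hx' | ⟨_, h2b⟩ | ⟨_, h2b⟩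
      · exact Finset.disjoint_left.mp (hdis j j' hjj') hx hx'
      · exact (N_not_mem hstd j).1 (h2b ▸ hx)
      · exact (N_not_mem hstd j).2 (h2b ▸ hx)
    · rcases hx' with hx' | ⟨h2a, h2b⟩ | ⟨h2a, h2b⟩
      · exact (N_not_mem hstd j').1 hx'
      · exact hjj' h2a.symm
      · omega
    · subst hxn
      rcases hx' with hx' | ⟨h2a, h2b⟩ | ⟨h2a, h2b⟩
      · exact (N_not_mem hstd j').2 hx'
      · omega
      · exact hjj' h2a.symm
  · -- cover
    apply Finset.ext
    intro x
    simp only [Finset.mem_biUnion, Finset.mem_univ, true_and, mem_insP]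
    constructor
    · rintro ⟨j, hx | ⟨-, rfl⟩ | ⟨-, rfl⟩⟩
      · exact angleB_mono (block_subset hstd j hx)
      · rw [mem_angleB_iff, abs_of_nonneg (by positivity)]; push_cast; omega
      · rw [mem_angleB_iff, abs_neg, abs_of_nonneg (by positivity)]; push_cast; omega
    · intro hx
      by_cases hxn : x ∈ angleB n
      · rw [← hcov] at hxn
        obtain ⟨j, -, hj⟩ := Finset.mem_biUnion.mp hxn
        exact ⟨j, Or.inl hj⟩
      · rw [mem_angleB_iff] at hx hxn
        push_cast at hx
        have : x = (n:ℤ)+1 ∨ x = -((n:ℤ)+1) := by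
          rcases abs_cases x with ⟨h1, h2⟩ | ⟨h1, h2⟩ <;> omega
        rcases this with rfl | rfl
        · exact ⟨i, Or.inr (Or.inl ⟨rfl, rfl⟩)⟩
        · exact ⟨pairIdx k i, Or.inr (Or.inr ⟨rfl, rfl⟩)⟩
  · exact mem_insP.mpr (Or.inl h0)
  · -- S₀ closed under negation
    intro x hx
    rw [mem_insP] at hx ⊢
    rcases hx with hx | ⟨h1, rfl⟩ | ⟨h1, rfl⟩
    · exact Or.inl (hneg x hx)
    · -- 0 = i, so pairIdx k i = 0
      refine Or.inr (Or.inr ⟨Fin.ext ?_, rfl⟩)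
      have hi0 : i.val = 0 := by rw [← h1]; rfl
      rcases pairIdx_cases k i with ⟨h2, h3⟩ | ⟨h2, h3⟩ | ⟨h2, h3, h4⟩ <;> omega
    · refine Or.inr (Or.inl ⟨Fin.ext ?_, by ring⟩)
      have hp0 : (pairIdx k i).val = 0 := by rw [← h1]; rfl
      rcases pairIdx_cases k i with ⟨h2, h3⟩ | ⟨h2, h3⟩ | ⟨h2, h3, h4⟩ <;> omega
  · -- pairing
    intro l hl h2l
    have hp := hpair l hl h2l
    apply Finset.ext
    intro x
    simp only [mem_insP, Finset.mem_image]
    constructor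
    · rintro (hx | ⟨hbi, rfl⟩ | ⟨hbp, hxn⟩)
      · rw [hp] at hx
        obtain ⟨y, hy, rfl⟩ := Finset.mem_image.mp hx
        exact ⟨y, Or.inl hy, rfl⟩
      · have hiv : i.val = 2*l := by rw [← hbi]
        refine ⟨-((n:ℤ)+1), Or.inr (Or.inr ⟨Fin.ext ?_, rfl⟩), by ring⟩
        rcases pairIdx_cases k i with ⟨h2, h3⟩ | ⟨h2, h3⟩ | ⟨h2, h3, h4⟩ <;>
          simp only [] <;> omega
      · subst hxn
        have hbv : (pairIdx k i).val = 2*l := by rw [← hbp]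
        refine ⟨(n:ℤ)+1, Or.inr (Or.inl ⟨Fin.ext ?_, rfl⟩), by ring⟩
        rcases pairIdx_cases k i with ⟨h2, h3⟩ | ⟨h2, h3⟩ | ⟨h2, h3, h4⟩ <;>
          simp only [] <;> omega
    · rintro ⟨y, hy | ⟨hai, rfl⟩ | ⟨hap, rfl⟩, rfl⟩
      · left
        rw [hp]
        exact Finset.mem_image_of_mem _ hy
      · have hiv : i.val = 2*l-1 := by rw [← hai]
        refine Or.inr (Or.inr ⟨Fin.ext ?_, rfl⟩)
        rcases pairIdx_cases k i with ⟨h2, h3⟩ | ⟨h2, h3⟩ | ⟨h2, h3, h4⟩ <;>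
          simp only [] <;> omega
      · have hpv : (pairIdx k i).val = 2*l-1 := by rw [← hap]
        refine Or.inr (Or.inl ⟨Fin.ext ?_, by ring⟩)
        rcases pairIdx_cases k i with ⟨h2, h3⟩ | ⟨h2, h3⟩ | ⟨h2, h3, h4⟩ <;>
          simp only [] <;> omega
  · intro l hl h
    rw [hmB, mem_insP]
    exact Or.inl (hmem l hl h)
  · intro l h
    rw [hmB, hmB]
    exact hmono l h

end Stmt2Aux

namespace Stmt2Aux
open Finset

lemma extP_zero {n k : ℕ} (S : Fin (2*k+1) → Finset ℤ) : extP n k S 0 = S 0 := by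
  rw [extP_val_lt (by simp)]
  exact congrArg S (Fin.ext (by simp))

lemma ext_mem_A {n k : ℕ} {S : Fin (2*k+1) → Finset ℤ} (hS : S ∈ A n k) :
    extP n k S ∈ A (n+1) (k+1) := by
  have hstd : IsStandardB n k S := hS
  obtain ⟨⟨hne, hdis, hcov, h0, hneg, hpair⟩, hmem, hmono⟩ := hS
  refine ⟨⟨?_, ?_, ?_, ?_, ?_, ?_⟩, ?_, ?_⟩
  · intro j
    rcases (by omega : j.val < 2*k+1 ∨ j.val = 2*k+1 ∨ j.val = 2*k+2) with h | h | h
    · rw [extP_val_lt h]; exact hne _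
    · rw [extP_val_eq1 h]; simp
    · rw [extP_val_eq2 h]; simp
  · intro j j' hjj'
    rw [Finset.disjoint_left]
    intro x hx hx'
    rcases (by omega : j.val < 2*k+1 ∨ j.val = 2*k+1 ∨ j.val = 2*k+2) with h | h | h <;>
      rcases (by omega : j'.val < 2*k+1 ∨ j'.val = 2*k+1 ∨ j'.val = 2*k+2) with h' | h' | h'
    · rw [extP_val_lt h] at hx
      rw [extP_val_lt h'] at hx'
      have hne' : (⟨j.val, h⟩ : Fin (2*k+1)) ≠ ⟨j'.val, h'⟩ := by
        intro hh
        apply hjj'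
        apply Fin.ext
        simpa [Fin.ext_iff] using hh
      exact Finset.disjoint_left.mp (hdis _ _ hne') hx hx'
    · rw [extP_val_lt h] at hx
      rw [extP_val_eq1 h'] at hx'
      rw [Finset.mem_singleton] at hx'
      exact (N_not_mem hstd _).2 (hx' ▸ hx)
    · rw [extP_val_lt h] at hx
      rw [extP_val_eq2 h'] at hx'
      rw [Finset.mem_singleton] at hx'
      exact (N_not_mem hstd _).1 (hx' ▸ hx)
    · rw [extP_val_eq1 h] at hx
      rw [extP_val_lt h'] at hx'
      rw [Finset.mem_singleton] at hx
      exact (N_not_mem hstd _).2 (hx ▸ hx')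
    · exact hjj' (Fin.ext (by omega))
    · rw [extP_val_eq1 h] at hx
      rw [extP_val_eq2 h'] at hx'
      rw [Finset.mem_singleton] at hx hx'
      omega
    · rw [extP_val_eq2 h] at hx
      rw [extP_val_lt h'] at hx'
      rw [Finset.mem_singleton] at hx
      exact (N_not_mem hstd _).1 (hx ▸ hx')
    · rw [extP_val_eq2 h] at hx
      rw [extP_val_eq1 h'] at hx'
      rw [Finset.mem_singleton] at hx hx'
      omega
    · exact hjj' (Fin.ext (by omega))
  · apply Finset.ext
    intro x
    simp only [Finset.mem_biUnion, Finset.mem_univ, true_and]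
    constructor
    · rintro ⟨j, hj⟩
      rcases (by omega : j.val < 2*k+1 ∨ j.val = 2*k+1 ∨ j.val = 2*k+2) with h | h | h
      · rw [extP_val_lt h] at hj
        exact angleB_mono (block_subset hstd _ hj)
      · rw [extP_val_eq1 h, Finset.mem_singleton] at hj
        subst hj
        rw [mem_angleB_iff, abs_neg, abs_of_nonneg (by positivity)]
        push_cast; omega
      · rw [extP_val_eq2 h, Finset.mem_singleton] at hj
        subst hj
        rw [mem_angleB_iff, abs_of_nonneg (by positivity)]
        push_cast; omega
    · intro hx
      by_cases hxn : x ∈ angleB n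
      · rw [← hcov] at hxn
        obtain ⟨j, -, hj⟩ := Finset.mem_biUnion.mp hxn
        refine ⟨⟨j.val, by omega⟩, ?_⟩
        rw [extP_val_lt (by exact j.isLt)]
        simpa using hj
      · rw [mem_angleB_iff] at hx hxn
        push_cast at hx
        have : x = (n:ℤ)+1 ∨ x = -((n:ℤ)+1) := by
          rcases abs_cases x with ⟨h1, h2⟩ | ⟨h1, h2⟩ <;> omega
        rcases this with rfl | rfl
        · exact ⟨⟨2*k+2, by omega⟩, by rw [extP_val_eq2 rfl]; simp⟩
        · exact ⟨⟨2*k+1, by omega⟩, by rw [extP_val_eq1 rfl]; simp⟩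
  · rw [extP_zero]; exact h0
  · rw [extP_zero]; exact hneg
  · intro l hl h2l
    rcases (by omega : 2*l < 2*k+1 ∨ 2*l = 2*k+2) with hc | hc
    · rw [extP_val_lt (show (⟨2*l, h2l⟩ : Fin (2*(k+1)+1)).val < 2*k+1 from hc),
        extP_val_lt (show (⟨2*l-1, by omega⟩ : Fin (2*(k+1)+1)).val < 2*k+1 by
          simp only []; omega)]
      exact hpair l hl hc
    · rw [extP_val_eq2 hc, extP_val_eq1 (show (⟨2*l-1, by omega⟩ : Fin (2*(k+1)+1)).val
        = 2*k+1 by simp only []; omega)]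
      simp
  · intro l hl h
    rcases (by omega : 2*l < 2*k+1 ∨ 2*l = 2*k+2) with hc | hc
    · rw [mB_extP_lt (show (⟨2*l, h⟩ : Fin (2*(k+1)+1)).val < 2*k+1 from hc),
        extP_val_lt (show (⟨2*l, h⟩ : Fin (2*(k+1)+1)).val < 2*k+1 from hc)]
      exact hmem l hl hc
    · rw [mB_extP_eq2 hc, extP_val_eq2 hc]
      simp
  · intro l h
    rcases (by omega : 2*(l+1) < 2*k+1 ∨ 2*(l+1) = 2*k+2) with hc | hc
    · rw [mB_extP_lt (show (⟨2*l, by omega⟩ : Fin (2*(k+1)+1)).val < 2*k+1 by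
          simp only []; omega),
        mB_extP_lt (show (⟨2*(l+1), h⟩ : Fin (2*(k+1)+1)).val < 2*k+1 from hc)]
      exact hmono l hc
    · rw [mB_extP_lt (show (⟨2*l, by omega⟩ : Fin (2*(k+1)+1)).val < 2*k+1 by
          simp only []; omega),
        mB_extP_eq2 hc]
      exact lt_of_le_of_lt (mB_lt_of_mem_A hstd _) (by omega)

end Stmt2Aux

namespace Stmt2Aux
open Finset

lemma image_neg_pair (n : ℕ) :
    ({((n:ℤ)+1), -((n:ℤ)+1)} : Finset ℤ).image (fun x => -x) = {((n:ℤ)+1), -((n:ℤ)+1)} := by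
  apply Finset.ext
  intro x
  simp only [Finset.mem_image, Finset.mem_insert, Finset.mem_singleton]
  constructor
  · rintro ⟨y, hy | hy, rfl⟩ <;> omega
  · rintro (rfl | rfl)
    · exact ⟨-((n:ℤ)+1), Or.inr rfl, by ring⟩
    · exact ⟨(n:ℤ)+1, Or.inl rfl, rfl⟩

lemma insP_sdiff {n k : ℕ} {S : Fin (2*k+1) → Finset ℤ} (hstd : IsStandardB n k S)
    (i : Fin (2*k+1)) (j : Fin (2*k+1)) :
    insP n k i S j \ {((n:ℤ)+1), -((n:ℤ)+1)} = S j := by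
  apply Finset.ext
  intro x
  simp only [Finset.mem_sdiff, mem_insP, Finset.mem_insert, Finset.mem_singleton]
  constructor
  · rintro ⟨hx | ⟨-, rfl⟩ | ⟨-, rfl⟩, hne⟩
    · exact hx
    · exact absurd (Or.inl rfl) hne
    · exact absurd (Or.inr rfl) hne
  · intro hx
    refine ⟨Or.inl hx, ?_⟩
    rintro (rfl | rfl)
    · exact (N_not_mem hstd j).1 hx
    · exact (N_not_mem hstd j).2 hx

lemma extP_inj (n k : ℕ) : Function.Injective (extP n k) := by
  intro S S' h
  funext j
  have h1 : extP n k S ⟨j.val, by omega⟩ = extP n k S' ⟨j.val, by omega⟩ := by rw [h]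
  rwa [extP_val_lt (show ((⟨j.val, by omega⟩ : Fin (2*(k+1)+1))).val < 2*k+1 from j.isLt),
    extP_val_lt (show ((⟨j.val, by omega⟩ : Fin (2*(k+1)+1))).val < 2*k+1 from j.isLt)] at h1

lemma N_mem_insP_iff {n k : ℕ} {S : Fin (2*k+1) → Finset ℤ} (hstd : IsStandardB n k S)
    (i : Fin (2*k+1)) (j : Fin (2*k+1)) :
    ((n:ℤ)+1) ∈ insP n k i S j ↔ j = i := by
  rw [mem_insP]
  constructor
  · rintro (h | ⟨h, -⟩ | ⟨-, h⟩)
    · exact absurd h (N_not_mem hstd j).1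
    · exact h
    · omega
  · intro h
    exact Or.inr (Or.inl ⟨h, rfl⟩)

end Stmt2Aux

namespace Stmt2Aux
open Finset

lemma block_unique {n k : ℕ} {T : Fin (2*k+1) → Finset ℤ} (hT : IsStandardB n k T)
    {x : ℤ} {j j' : Fin (2*k+1)} (hj : x ∈ T j) (hj' : x ∈ T j') : j = j' := by
  by_contra h
  exact Finset.disjoint_left.mp (hT.1.2.1 j j' h) hj hj'

lemma pair_mem {n k : ℕ} {T : Fin (2*k+1) → Finset ℤ} (hT : IsStandardB n k T)
    {j : Fin (2*k+1)} {x : ℤ} (hx : x ∈ T j) : -x ∈ T (pairIdx k j) := by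
  obtain ⟨⟨hne, hdis, hcov, h0, hneg, hpair⟩, -, -⟩ := hT
  rcases pairIdx_cases k j with ⟨h1, h2⟩ | ⟨h1, h2⟩ | ⟨h1, h2, h3⟩
  · have hj : j = 0 := Fin.ext (by simpa using h1)
    have hp : pairIdx k j = 0 := Fin.ext (by simpa using h2)
    rw [hp]
    rw [hj] at hx
    exact hneg x hx
  · obtain ⟨l, hl, hval⟩ : ∃ l, 1 ≤ l ∧ j.val = 2*l-1 := ⟨(j.val+1)/2, by omega⟩
    have h2l : 2*l < 2*k+1 := by have := (pairIdx k j).isLt; omega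
    have hp := hpair l hl h2l
    have hpi : pairIdx k j = ⟨2*l, h2l⟩ := Fin.ext (show (pairIdx k j).val = 2*l by omega)
    have hji : j = ⟨2*l-1, by omega⟩ := Fin.ext (show j.val = 2*l-1 by omega)
    rw [hpi, hp]
    rw [hji] at hx
    exact Finset.mem_image_of_mem _ hx
  · obtain ⟨l, hl, hval⟩ : ∃ l, 1 ≤ l ∧ j.val = 2*l := ⟨j.val/2, by omega⟩
    have h2l : 2*l < 2*k+1 := by have := j.isLt; omega
    have hp := hpair l hl h2l
    have hji : j = ⟨2*l, h2l⟩ := Fin.ext (show j.val = 2*l by omega)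
    have hpi : pairIdx k j = ⟨2*l-1, by omega⟩ := Fin.ext (show (pairIdx k j).val = 2*l-1 by omega)
    rw [hji, hp] at hx
    obtain ⟨y, hy, rfl⟩ := Finset.mem_image.mp hx
    rw [hpi, neg_neg]
    exact hy

end Stmt2Aux

namespace Stmt2Aux
open Finset

lemma decompose {n k : ℕ} {T : Fin (2*(k+1)+1) → Finset ℤ} (hT : T ∈ A (n+1) (k+1)) :
    (∃ S ∈ A n k, T = extP n k S) ∨
    (∃ i : Fin (2*(k+1)+1), ∃ S ∈ A n (k+1), T = insP n (k+1) i S) := by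
  have hstd : IsStandardB (n+1) (k+1) T := hT
  obtain ⟨⟨hne, hdis, hcov, h0, hneg, hpair⟩, hmem, hmono⟩ := hT
  have hNang : ((n:ℤ)+1) ∈ angleB (n+1) := by
    rw [mem_angleB_iff, abs_of_nonneg (by positivity)]
    push_cast
    omega
  rw [← hcov] at hNang
  obtain ⟨j₀, -, hj₀⟩ := Finset.mem_biUnion.mp hNang
  by_cases hcase : mAbs (T j₀) = (n:ℤ)+1
  · left
    have hj₀0 : j₀.val ≠ 0 := by
      intro h
      have hz : j₀ = 0 := Fin.ext (by simpa using h)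
      rw [hz, mAbs_eq_zero h0] at hcase
      omega
    have hj₀even : j₀.val % 2 = 0 := by
      by_contra hodd
      obtain ⟨l, hl, hval⟩ : ∃ l, 1 ≤ l ∧ j₀.val = 2*l-1 := ⟨(j₀.val+1)/2, by omega⟩
      have h2l : 2*l < 2*(k+1)+1 := by have := j₀.isLt; omega
      have hp := hpair l hl h2l
      have hj₀eq : j₀ = ⟨2*l-1, by omega⟩ := Fin.ext (show j₀.val = 2*l-1 from hval)
      have hmm := hmem l hl h2l
      have he : mB T ⟨2*l, h2l⟩ = (n:ℤ)+1 := by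
        rw [mB_eq_mAbs, hp, mAbs_image_neg, ← hj₀eq, hcase]
      rw [he] at hmm
      have hb := block_unique hstd hj₀ hmm
      have hvv : j₀.val = 2*l := congrArg Fin.val hb
      omega
    obtain ⟨l, hl, hval⟩ : ∃ l, 1 ≤ l ∧ j₀.val = 2*l := ⟨j₀.val/2, by omega⟩
    have hnegN : -((n:ℤ)+1) ∉ T j₀ := by
      intro hmemneg
      have h1 : -(-((n:ℤ)+1)) ∈ T (pairIdx (k+1) j₀) := pair_mem hstd hmemneg
      rw [neg_neg] at h1
      have h2 := block_unique hstd hj₀ h1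
      have h3 : j₀.val = (pairIdx (k+1) j₀).val := congrArg Fin.val h2
      rcases pairIdx_cases (k+1) j₀ with ⟨a, b⟩ | ⟨a, b⟩ | ⟨a, b, c⟩ <;> omega
    have hall : ∀ x ∈ T j₀, x = (n:ℤ)+1 := by
      intro x hx
      have h1 := mAbs_le hx
      rw [hcase] at h1
      have h2 : |x| ≤ (n:ℤ)+1 := by
        have := abs_le_of_mem_angleB (block_subset hstd j₀ hx)
        push_cast at this
        exact this
      have hxval : x = (n:ℤ)+1 ∨ x = -((n:ℤ)+1) := by
        rcases abs_cases x with ⟨u, v⟩ | ⟨u, v⟩ <;> omega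
      rcases hxval with rfl | rfl
      · rfl
      · exact absurd hx hnegN
    have hsing : T j₀ = {((n:ℤ)+1)} :=
      Finset.eq_singleton_iff_unique_mem.mpr ⟨hj₀, hall⟩
    have hlk : l = k+1 := by
      by_contra hne'
      have hlk' : 2*(l+1) < 2*(k+1)+1 := by have := j₀.isLt; omega
      have hmono' := hmono l hlk'
      have e1 : mB T ⟨2*l, by omega⟩ = (n:ℤ)+1 := by
        rw [mB_eq_mAbs]
        have hee : (⟨2*l, by omega⟩ : Fin (2*(k+1)+1)) = j₀ :=
          Fin.ext (show 2*l = j₀.val by omega)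
        rw [hee, hcase]
      have e2 : mB T ⟨2*(l+1), hlk'⟩ ≤ (n:ℤ)+1 := by
        have := mB_lt_of_mem_A hstd ⟨2*(l+1), hlk'⟩
        push_cast at this
        exact this
      rw [e1] at hmono'
      omega
    have h2k2 : (⟨2*(k+1), by omega⟩ : Fin (2*(k+1)+1)) = j₀ :=
      Fin.ext (show 2*(k+1) = j₀.val by omega)
    have hp := hpair (k+1) (by omega) (by omega)
    have hpair1 : T ⟨2*(k+1)-1, by omega⟩ = {-((n:ℤ)+1)} := by
      have h5 : (T ⟨2*(k+1)-1, by omega⟩).image (fun x => -x) = {((n:ℤ)+1)} := by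
        rw [← hp, h2k2, hsing]
      have h6 := congrArg (Finset.image (fun x : ℤ => -x)) h5
      rw [Finset.image_image] at h6
      simp only [Function.comp_def, neg_neg, Finset.image_id'] at h6
      rw [Finset.image_singleton] at h6
      exact h6
    refine ⟨fun j => T ⟨j.val, by have := j.isLt; omega⟩, ⟨⟨?_, ?_, ?_, ?_, ?_, ?_⟩, ?_, ?_⟩, ?_⟩
    · intro j
      exact hne _
    · intro j j' hjj'
      refine hdis _ _ (fun h => hjj' (Fin.ext ?_))
      have hv := congrArg Fin.val h
      exact hv
    · apply Finset.ext
      intro x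
      simp only [Finset.mem_biUnion, Finset.mem_univ, true_and]
      constructor
      · rintro ⟨j, hj⟩
        have hx1 := abs_le_of_mem_angleB (block_subset hstd _ hj)
        push_cast at hx1
        have hxN : x ≠ (n:ℤ)+1 := by
          rintro rfl
          have hb := block_unique hstd hj hj₀
          have : j.val = j₀.val := congrArg Fin.val hb
          have := j.isLt
          omega
        have hxnN : x ≠ -((n:ℤ)+1) := by
          rintro rfl
          have hmm : -((n:ℤ)+1) ∈ T ⟨2*(k+1)-1, by omega⟩ := by
            rw [hpair1]
            exact Finset.mem_singleton_self _
          have hb := block_unique hstd hj hmm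
          have : j.val = 2*(k+1)-1 := congrArg Fin.val hb
          have := j.isLt
          omega
        rw [mem_angleB_iff]
        rcases abs_cases x with ⟨u, v⟩ | ⟨u, v⟩ <;> omega
      · intro hx
        have hx1 : x ∈ angleB (n+1) := angleB_mono hx
        rw [← hcov] at hx1
        obtain ⟨j', -, hj'⟩ := Finset.mem_biUnion.mp hx1
        have habs := abs_le_of_mem_angleB hx
        have hj'lt : j'.val < 2*k+1 := by
          by_contra hge
          rcases (by have := j'.isLt; omega : j'.val = 2*(k+1)-1 ∨ j'.val = 2*(k+1)) with h | h
          · have he : j' = ⟨2*(k+1)-1, by omega⟩ := Fin.ext (show j'.val = 2*(k+1)-1 from h)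
            rw [he, hpair1, Finset.mem_singleton] at hj'
            subst hj'
            rw [abs_neg, abs_of_nonneg (by positivity)] at habs
            omega
          · have he : j' = j₀ := Fin.ext (by omega)
            rw [he, hsing, Finset.mem_singleton] at hj'
            subst hj'
            rw [abs_of_nonneg (by positivity)] at habs
            omega
        exact ⟨⟨j'.val, hj'lt⟩, hj'⟩
    · have he : (⟨((0 : Fin (2*k+1))).val, by have := (0 : Fin (2*k+1)).isLt; omega⟩ :
          Fin (2*(k+1)+1)) = 0 := Fin.ext (by simp)
      show (0:ℤ) ∈ T ⟨((0 : Fin (2*k+1))).val, by have := (0 : Fin (2*k+1)).isLt; omega⟩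
      rw [he]
      exact h0
    · intro x hx
      have he : (⟨((0 : Fin (2*k+1))).val, by have := (0 : Fin (2*k+1)).isLt; omega⟩ :
          Fin (2*(k+1)+1)) = 0 := Fin.ext (by simp)
      have hx' : x ∈ T 0 := by
        rw [← he]
        exact hx
      show -x ∈ T ⟨((0 : Fin (2*k+1))).val, by have := (0 : Fin (2*k+1)).isLt; omega⟩
      rw [he]
      exact hneg x hx'
    · intro l' hl' h2l'
      exact hpair l' hl' (by omega)
    · intro l' hl' h2l'
      exact hmem l' hl' (by omega)
    · intro l' h2l'
      exact hmono l' (by omega)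
    · funext j
      rcases (by have := j.isLt; omega : j.val < 2*k+1 ∨ j.val = 2*k+1 ∨ j.val = 2*k+2)
        with h | h | h
      · rw [extP_val_lt h]
      · rw [extP_val_eq1 h]
        rw [show j = ⟨2*(k+1)-1, by omega⟩ from Fin.ext (show j.val = 2*(k+1)-1 by omega)]
        exact hpair1
      · rw [extP_val_eq2 h]
        rw [show j = j₀ from Fin.ext (show j.val = j₀.val by omega)]
        exact hsing
  · right
    have hub : mAbs (T j₀) ≤ (n:ℤ)+1 := by
      have := mAbs_le hj₀
      rwa [abs_of_nonneg (by positivity)] at this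
    have hlt : mAbs (T j₀) < (n:ℤ)+1 := lt_of_le_of_ne hub hcase
    obtain ⟨x₀, hx₀, hx₀e⟩ := mAbs_exists (hne j₀)
    have hx₀N : x₀ ≠ (n:ℤ)+1 ∧ x₀ ≠ -((n:ℤ)+1) := by
      constructor
      · rintro rfl
        rw [abs_of_nonneg (by positivity)] at hx₀e
        omega
      · rintro rfl
        rw [abs_neg, abs_of_nonneg (by positivity)] at hx₀e
        omega
    have hNuniq : ∀ j, ((n:ℤ)+1) ∈ T j → j = j₀ := fun j hj => block_unique hstd hj hj₀
    have hnegmem : -((n:ℤ)+1) ∈ T (pairIdx (k+1) j₀) := pair_mem hstd hj₀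
    have hnegNuniq : ∀ j, -((n:ℤ)+1) ∈ T j → j = pairIdx (k+1) j₀ :=
      fun j hj => block_unique hstd hj hnegmem
    set R : Finset ℤ := {((n:ℤ)+1), -((n:ℤ)+1)} with hR
    set S : Fin (2*(k+1)+1) → Finset ℤ := fun j => T j \ R with hSdef
    have hSne : ∀ j, (S j).Nonempty := by
      intro j
      by_cases hj1 : j = j₀
      · subst hj1
        refine ⟨x₀, Finset.mem_sdiff.mpr ⟨hx₀, ?_⟩⟩
        simp only [hR, Finset.mem_insert, Finset.mem_singleton]
        push_neg
        exact hx₀N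
      by_cases hj2 : j = pairIdx (k+1) j₀
      · subst hj2
        refine ⟨-x₀, Finset.mem_sdiff.mpr ⟨pair_mem hstd hx₀, ?_⟩⟩
        simp only [hR, Finset.mem_insert, Finset.mem_singleton]
        push_neg
        exact ⟨fun h => hx₀N.2 (by omega), fun h => hx₀N.1 (by omega)⟩
      · obtain ⟨y, hy⟩ := hne j
        refine ⟨y, Finset.mem_sdiff.mpr ⟨hy, ?_⟩⟩
        simp only [hR, Finset.mem_insert, Finset.mem_singleton]
        push_neg
        exact ⟨fun h => hj1 (hNuniq j (h ▸ hy)), fun h => hj2 (hnegNuniq j (h ▸ hy))⟩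
    have hmBS : ∀ j, mB S j = mB T j := by
      intro j
      rw [mB_eq_mAbs, mB_eq_mAbs]
      symm
      apply mAbs_congr Finset.sdiff_subset (hSne j)
      intro x hx hx'
      have hxR : x ∈ R := by
        by_contra hxR
        exact hx' (Finset.mem_sdiff.mpr ⟨hx, hxR⟩)
      have habs : |x| = (n:ℤ)+1 := by
        simp only [hR, Finset.mem_insert, Finset.mem_singleton] at hxR
        rcases hxR with rfl | rfl
        · rw [abs_of_nonneg (by positivity)]
        · rw [abs_neg, abs_of_nonneg (by positivity)]
      rw [habs]
      have hle : mAbs (S j) ≤ ((n+1 : ℕ) : ℤ) :=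
        mAbs_le_n (hSne j) (fun y hy => block_subset hstd j (Finset.sdiff_subset hy))
      push_cast at hle
      exact hle
    refine ⟨j₀, S, ⟨⟨hSne, ?_, ?_, ?_, ?_, ?_⟩, ?_, ?_⟩, ?_⟩
    · intro j j' hjj'
      exact (hdis j j' hjj').mono Finset.sdiff_subset Finset.sdiff_subset
    · apply Finset.ext
      intro x
      simp only [Finset.mem_biUnion, Finset.mem_univ, true_and, hSdef, Finset.mem_sdiff]
      constructor
      · rintro ⟨j, hj, hjR⟩
        have h1 := abs_le_of_mem_angleB (block_subset hstd j hj)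
        simp only [hR, Finset.mem_insert, Finset.mem_singleton] at hjR
        push_neg at hjR
        rw [mem_angleB_iff]
        push_cast at h1
        rcases abs_cases x with ⟨u, v⟩ | ⟨u, v⟩ <;> omega
      · intro hx
        have hx1 : x ∈ angleB (n+1) := angleB_mono hx
        rw [← hcov] at hx1
        obtain ⟨j, -, hj⟩ := Finset.mem_biUnion.mp hx1
        refine ⟨j, hj, ?_⟩
        simp only [hR, Finset.mem_insert, Finset.mem_singleton]
        push_neg
        have habs := abs_le_of_mem_angleB hx
        constructor
        · rintro rfl
          rw [abs_of_nonneg (by positivity)] at habs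
          omega
        · rintro rfl
          rw [abs_neg, abs_of_nonneg (by positivity)] at habs
          omega
    · refine Finset.mem_sdiff.mpr ⟨h0, ?_⟩
      simp only [hR, Finset.mem_insert, Finset.mem_singleton]
      push_neg
      constructor <;> omega
    · intro x hx
      simp only [hSdef, Finset.mem_sdiff, hR, Finset.mem_insert, Finset.mem_singleton]
        at hx ⊢
      push_neg at hx ⊢
      exact ⟨hneg x hx.1, by omega, by omega⟩
    · intro l hl h2l
      have hp := hpair l hl h2l
      simp only [hSdef]
      rw [hp, hR, Finset.image_sdiff _ _ neg_injective, image_neg_pair]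
    · intro l hl h2l
      rw [hmBS ⟨2*l, h2l⟩]
      have hm := hmem l hl h2l
      refine Finset.mem_sdiff.mpr ⟨hm, ?_⟩
      simp only [hR, Finset.mem_insert, Finset.mem_singleton]
      push_neg
      constructor
      · intro hcontra
        have h7 : ((n:ℤ)+1) ∈ T ⟨2*l, h2l⟩ := hcontra ▸ hm
        have h9 := hNuniq _ h7
        rw [← h9] at hcase
        exact hcase (by rw [← mB_eq_mAbs]; exact hcontra)
      · intro hcontra
        have h8 := mAbs_nonneg (T ⟨2*l, h2l⟩)
        rw [← mB_eq_mAbs] at h8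
        omega
    · intro l h2l
      rw [hmBS, hmBS]
      exact hmono l h2l
    · funext j
      apply Finset.ext
      intro x
      rw [mem_insP]
      simp only [hSdef, Finset.mem_sdiff, hR, Finset.mem_insert, Finset.mem_singleton]
      constructor
      · intro hx
        by_cases h1 : x = (n:ℤ)+1
        · subst h1
          exact Or.inr (Or.inl ⟨hNuniq j hx, rfl⟩)
        by_cases h2 : x = -((n:ℤ)+1)
        · subst h2
          exact Or.inr (Or.inr ⟨hnegNuniq j hx, rfl⟩)
        · exact Or.inl ⟨hx, by push_neg; exact ⟨h1, h2⟩⟩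
      · rintro (⟨hx, -⟩ | ⟨rfl, rfl⟩ | ⟨rfl, rfl⟩)
        · exact hx
        · exact hj₀
        · exact hnegmem

end Stmt2Aux

namespace Stmt2Aux
open Finset

def liftp {k : ℕ} (p : ℤ × Fin (2*k+1)) : ℤ × Fin (2*(k+1)+1) :=
  (p.1, ⟨p.2.val, by have := p.2.isLt; omega⟩)

lemma liftp_inj (k : ℕ) : Function.Injective (liftp (k := k)) := by
  rintro ⟨s, j⟩ ⟨s', j'⟩ h
  rw [Prod.ext_iff] at h
  obtain ⟨h1, h2⟩ := h
  have h3 := congrArg Fin.val h2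
  exact Prod.ext h1 (Fin.ext (h3 : j.val = j'.val))

lemma inv_extP {n k : ℕ} {S : Fin (2*k+1) → Finset ℤ} (hS : S ∈ A n k) :
    invB (extP n k S) = invB S := by
  have hstd : IsStandardB n k S := hS
  rw [invB_eq_ncard, invB_eq_ncard]
  have himg : invSet (extP n k S) = liftp '' invSet S := by
    apply Set.ext
    intro p
    constructor
    · rintro ⟨⟨i, hij, hi⟩, hmb⟩
      have hjlt : p.2.val < 2*k+1 := by
        by_contra hge
        have hival : i.val < p.2.val := hij
        rcases (by have := p.2.isLt; omega : p.2.val = 2*k+1 ∨ p.2.val = 2*k+2) with h | h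
        · rw [mB_extP_eq1 h] at hmb
          have hilt : i.val < 2*k+1 := by omega
          rw [extP_val_lt hilt] at hi
          have := abs_le_of_mem_angleB (block_subset hstd _ hi)
          rcases abs_cases p.1 with ⟨u, v⟩ | ⟨u, v⟩ <;> omega
        · rw [mB_extP_eq2 h] at hmb
          rcases (by omega : i.val < 2*k+1 ∨ i.val = 2*k+1) with h' | h'
          · rw [extP_val_lt h'] at hi
            have := abs_le_of_mem_angleB (block_subset hstd _ hi)
            rcases abs_cases p.1 with ⟨u, v⟩ | ⟨u, v⟩ <;> omega
          · rw [extP_val_eq1 h', Finset.mem_singleton] at hi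
            omega
      have hilt : i.val < 2*k+1 := by have : i.val < p.2.val := hij; omega
      rw [extP_val_lt hilt] at hi
      rw [mB_extP_lt hjlt] at hmb
      exact ⟨(p.1, ⟨p.2.val, hjlt⟩), ⟨⟨⟨i.val, hilt⟩, hij, hi⟩, hmb⟩, rfl⟩
    · rintro ⟨q, ⟨⟨i', hij', hi'⟩, hmb'⟩, rfl⟩
      refine ⟨⟨⟨i'.val, by have := i'.isLt; omega⟩, ?_, ?_⟩, ?_⟩
      · show i'.val < q.2.val
        exact hij'
      · rw [extP_val_lt (show ((⟨i'.val, by have := i'.isLt; omega⟩ :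
            Fin (2*(k+1)+1))).val < 2*k+1 from i'.isLt)]
        exact hi'
      · rw [mB_extP_lt (show (liftp q).2.val < 2*k+1 from q.2.isLt)]
        exact hmb'
  rw [himg, Set.ncard_image_of_injective _ (liftp_inj k)]

lemma inv_insP {n k : ℕ} {S : Fin (2*k+1) → Finset ℤ} (hS : S ∈ A n k)
    (i : Fin (2*k+1)) :
    invB (insP n k i S) = invB S + (2*k - i.val) := by
  have hstd : IsStandardB n k S := hS
  rw [invB_eq_ncard, invB_eq_ncard]
  have hmB := mB_insP hstd i
  have hsplit : invSet (insP n k i S) =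
      invSet S ∪ (fun j => (((n:ℤ)+1), j)) '' (Set.Ioi i) := by
    apply Set.ext
    intro p
    constructor
    · rintro ⟨⟨i', hij', hi'⟩, hmb⟩
      rw [hmB] at hmb
      rcases mem_insP.mp hi' with h | ⟨rfl, hN⟩ | ⟨hpi, hN⟩
      · exact Or.inl ⟨⟨i', hij', h⟩, hmb⟩
      · refine Or.inr ⟨p.2, hij', ?_⟩
        show (((n:ℤ)+1), p.2) = p
        rw [← hN]
      · exfalso
        have h0 := mAbs_nonneg (S p.2)
        rw [← mB_eq_mAbs] at h0
        omega
    · rintro (⟨⟨i', hij', hi'⟩, hmb⟩ | ⟨j, hj, rfl⟩)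
      · exact ⟨⟨i', hij', subset_insP i S i' hi'⟩, by rw [hmB]; exact hmb⟩
      · refine ⟨⟨i, hj, ?_⟩, ?_⟩
        · show ((n:ℤ)+1) ∈ insP n k i S i
          exact mem_insP.mpr (Or.inr (Or.inl ⟨rfl, rfl⟩))
        · rw [hmB]
          have h1 := mB_lt_of_mem_A hstd j
          show mB S j ≤ (n:ℤ)+1
          omega
  have hdisj : Disjoint (invSet S) ((fun j => (((n:ℤ)+1), j)) '' (Set.Ioi i)) := by
    rw [Set.disjoint_left]
    rintro p hp ⟨j, hj, rfl⟩
    obtain ⟨⟨i', -, hi'⟩, -⟩ := hp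
    exact (N_not_mem hstd i').1 hi'
  rw [hsplit, Set.ncard_union_eq hdisj (invSet_finite S) (Set.toFinite _)]
  congr 1
  rw [Set.ncard_image_of_injective _
    (fun a b h => (congrArg Prod.snd h : a = b))]
  rw [← Finset.coe_Ioi, Set.ncard_coe_finset, Fin.card_Ioi]
  omega

end Stmt2Aux

namespace Stmt2Aux
open Finset Polynomial

lemma invB_fin_one (S : Fin (2*0+1) → Finset ℤ) : invB S = 0 := by
  rw [invB_eq_ncard]
  convert Set.ncard_empty (ℤ × Fin (2*0+1))
  rw [Set.eq_empty_iff_forall_notMem]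
  rintro ⟨s, j⟩ ⟨⟨i, hij, -⟩, -⟩
  have h1 : i.val < j.val := hij
  have h2 := i.isLt
  have h3 := j.isLt
  omega

lemma A_zero (n : ℕ) : A n 0 = {fun _ => angleB n} := by
  apply Set.ext
  intro S
  simp only [Set.mem_singleton_iff]
  constructor
  · intro hS
    obtain ⟨⟨hne, hdis, hcov, h0, hneg, hpair⟩, -, -⟩ := hS
    funext j
    have hj : j = 0 := Fin.ext (by have := j.isLt; omega)
    subst hj
    rw [← hcov]
    apply Finset.ext
    intro x
    simp only [Finset.mem_biUnion, Finset.mem_univ, true_and]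
    constructor
    · intro h
      exact ⟨0, h⟩
    · rintro ⟨i, hi⟩
      have : i = 0 := Fin.ext (by have := i.isLt; omega)
      rwa [this] at hi
  · rintro rfl
    have h0mem : (0:ℤ) ∈ angleB n := by
      rw [mem_angleB_iff]
      simp
    refine ⟨⟨fun _ => ⟨0, h0mem⟩, fun i j hij => absurd (Fin.ext (by
        have := i.isLt; have := j.isLt; omega)) hij, ?_, h0mem, ?_, ?_⟩, ?_, ?_⟩
    · apply Finset.ext
      intro x
      simp only [Finset.mem_biUnion, Finset.mem_univ, true_and]
      exact ⟨fun ⟨_, h⟩ => h, fun h => ⟨0, h⟩⟩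
    · intro x hx
      rw [mem_angleB_iff] at hx ⊢
      rwa [abs_neg]
    · intro i hi h
      omega
    · intro i hi h
      omega
    · intro i h
      omega

lemma A_O_succ (k : ℕ) : A 0 (k+1) = ∅ := by
  rw [Set.eq_empty_iff_forall_notMem]
  intro S hS
  have hstd : IsStandardB 0 (k+1) S := hS
  obtain ⟨⟨hne, hdis, hcov, h0, hneg, hpair⟩, -, -⟩ := hS
  obtain ⟨y, hy⟩ := hne ⟨1, by omega⟩
  have hy0 : y = 0 := by
    have := abs_le_of_mem_angleB (block_subset hstd _ hy)
    rcases abs_cases y with ⟨u, v⟩ | ⟨u, v⟩ <;> omega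
  subst hy0
  have := block_unique hstd h0 hy
  have hv : (0:ℕ) = 1 := congrArg Fin.val this
  omega

lemma finsum_A (n k : ℕ) (f : (Fin (2*k+1) → Finset ℤ) → Polynomial ℤ) :
    ∑ᶠ S ∈ A n k, f S = ∑ S ∈ (A_finite n k).toFinset, f S := by
  rw [← finsum_mem_coe_finset, Set.Finite.coe_toFinset]

lemma qStirB_zero (n : ℕ) : qStirB n 0 = 1 := by
  induction n with
  | zero => rfl
  | succ n ih => rw [qStirB, ih]

lemma qb_eq_sum (k : ℕ) :
    ∑ i : Fin (2*(k+1)+1), (Polynomial.X : Polynomial ℤ)^(2*(k+1) - i.val) =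
      qb (2*(k+1)+1) := by
  rw [Fin.sum_univ_eq_sum_range (fun t => (Polynomial.X : Polynomial ℤ)^(2*(k+1) - t)),
    qb, ← Finset.sum_range_reflect (fun t => (Polynomial.X : Polynomial ℤ)^t) (2*(k+1)+1)]
  apply Finset.sum_congr rfl
  intro j hj
  congr 1

end Stmt2Aux

namespace Stmt2Aux
open Finset Polynomial

lemma step (n k : ℕ)
    (ih1 : qStirB n k = ∑ᶠ S ∈ A n k, (Polynomial.X : Polynomial ℤ) ^ invB S)
    (ih2 : qStirB n (k+1) = ∑ᶠ S ∈ A n (k+1), (Polynomial.X : Polynomial ℤ) ^ invB S) :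
    qStirB (n+1) (k+1) =
      ∑ᶠ S ∈ A (n+1) (k+1), (Polynomial.X : Polynomial ℤ) ^ invB S := by
  have hdecomp : A (n+1) (k+1) =
      extP n k '' A n k ∪ ⋃ i : Fin (2*(k+1)+1), insP n (k+1) i '' A n (k+1) := by
    apply Set.ext
    intro T
    constructor
    · intro hT
      rcases decompose hT with ⟨S, hS, rfl⟩ | ⟨i, S, hS, rfl⟩
      · exact Or.inl (Set.mem_image_of_mem _ hS)
      · exact Or.inr (Set.mem_iUnion.mpr ⟨i, Set.mem_image_of_mem _ hS⟩)
    · rintro (⟨S, hS, rfl⟩ | hT)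
      · exact ext_mem_A hS
      · obtain ⟨i, hTi⟩ := Set.mem_iUnion.mp hT
        obtain ⟨S, hS, rfl⟩ := hTi
        exact ins_mem_A hS i
  have hdisj : Disjoint (extP n k '' A n k)
      (⋃ i : Fin (2*(k+1)+1), insP n (k+1) i '' A n (k+1)) := by
    rw [Set.disjoint_left]
    rintro T ⟨S, hS, rfl⟩ hT2
    obtain ⟨i, hTi⟩ := Set.mem_iUnion.mp hT2
    obtain ⟨S', hS', heq⟩ := hTi
    have e1 : mB (extP n k S) ⟨2*(k+1), by omega⟩ = (n:ℤ)+1 :=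
      mB_extP_eq2 (show 2*(k+1) = 2*k+2 by omega)
    have e2 : mB (insP n (k+1) i S') ⟨2*(k+1), by omega⟩ ≤ (n:ℤ) := by
      rw [mB_insP hS' i]
      exact mB_lt_of_mem_A hS' _
    rw [heq, e1] at e2
    omega
  have hpw : Pairwise (Function.onFun Disjoint fun i : Fin (2*(k+1)+1) =>
      insP n (k+1) i '' A n (k+1)) := by
    intro i i' hne'
    show Disjoint (insP n (k+1) i '' A n (k+1)) (insP n (k+1) i' '' A n (k+1))
    rw [Set.disjoint_left]
    rintro T ⟨S, hS, rfl⟩ ⟨S', hS', heq⟩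
    have h1 : ((n:ℤ)+1) ∈ insP n (k+1) i S i := mem_insP.mpr (Or.inr (Or.inl ⟨rfl, rfl⟩))
    rw [← heq] at h1
    rcases mem_insP.mp h1 with h | ⟨h, -⟩ | ⟨-, h⟩
    · exact (N_not_mem hS' i).1 h
    · exact hne' h
    · omega
  rw [qStirB, hdecomp, finsum_mem_union hdisj ((A_finite n k).image _)
    (Set.finite_iUnion (fun i => (A_finite n (k+1)).image _))]
  congr 1
  · rw [finsum_mem_image (fun S hS S' hS' h => extP_inj n k h), ih1]
    exact finsum_mem_congr rfl (fun S hS => by rw [inv_extP hS])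
  · rw [finsum_mem_iUnion hpw (fun i => (A_finite n (k+1)).image _),
      finsum_eq_sum_of_fintype]
    have hterm : ∀ i : Fin (2*(k+1)+1),
        ∑ᶠ T ∈ insP n (k+1) i '' A n (k+1), (Polynomial.X : Polynomial ℤ) ^ invB T =
        (Polynomial.X : Polynomial ℤ)^(2*(k+1) - i.val) * qStirB n (k+1) := by
      intro i
      rw [finsum_mem_image (fun S hS S' hS' h => by
        funext j
        rw [← insP_sdiff hS i j, ← insP_sdiff hS' i j, h])]
      have hc : ∑ᶠ S ∈ A n (k+1), (Polynomial.X : Polynomial ℤ) ^ invB (insP n (k+1) i S) =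
          ∑ᶠ S ∈ A n (k+1), (Polynomial.X : Polynomial ℤ)^(2*(k+1) - i.val) *
            (Polynomial.X : Polynomial ℤ) ^ invB S :=
        finsum_mem_congr rfl (fun S hS => by rw [inv_insP hS i, pow_add, mul_comm])
      rw [hc, finsum_A, ← Finset.mul_sum, ← finsum_A, ← ih2]
    rw [Finset.sum_congr rfl (fun i _ => hterm i), ← Finset.sum_mul, qb_eq_sum]

end Stmt2Aux

open Stmt2Aux in
/-- S_B[n,k] = Σ_{ρ standard} q^{inv ρ}. -/
theorem stmt2 (n k : ℕ) :
    qStirB n k =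
      ∑ᶠ S ∈ {S : Fin (2*k+1) → Finset ℤ | IsStandardB n k S},
        (Polynomial.X : Polynomial ℤ) ^ invB S := by
  induction n generalizing k with
  | zero =>
    cases k with
    | zero =>
      show qStirB 0 0 = ∑ᶠ S ∈ A 0 0, (Polynomial.X : Polynomial ℤ) ^ invB S
      rw [A_zero 0, finsum_mem_singleton, invB_fin_one, pow_zero]
      rfl
    | succ k =>
      show qStirB 0 (k+1) = ∑ᶠ S ∈ A 0 (k+1), (Polynomial.X : Polynomial ℤ) ^ invB S
      rw [A_O_succ k, finsum_mem_empty]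
      rfl
  | succ n ih =>
    cases k with
    | zero =>
      show qStirB (n+1) 0 = ∑ᶠ S ∈ A (n+1) 0, (Polynomial.X : Polynomial ℤ) ^ invB S
      rw [A_zero, finsum_mem_singleton, invB_fin_one, pow_zero, qStirB_zero]
    | succ k =>
      exact step n k (ih k) (ih (k+1))
end

section
/- For every standard type B partition π of ⟨n⟩ with 2k+1 blocks, lob_{B'}(π) = k. -/
open Finset Polynomial

lemma mB_nonneg {m : ℕ} (S : Fin m → Finset ℤ) (j : Fin m) : 0 ≤ mB S j := by
  unfold mB
  cases h : ((S j).image (fun x => |x|)).min with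
  | top => simp
  | coe a =>
    have ha : a ∈ (S j).image (fun x => |x|) := Finset.mem_of_min h
    obtain ⟨x, _, rfl⟩ := Finset.mem_image.mp ha
    simp [abs_nonneg]

lemma mB_le_abs {m : ℕ} {S : Fin m → Finset ℤ} {j : Fin m} {s : ℤ}
    (hs : s ∈ S j) : mB S j ≤ |s| := by
  have hmem : |s| ∈ (S j).image (fun x => |x|) := Finset.mem_image_of_mem _ hs
  have hmin := Finset.min_le hmem
  unfold mB
  cases h : ((S j).image (fun x => |x|)).min with
  | top => simp [h] at hmin
  | coe a =>
    rw [h] at hmin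
    simpa using hmin

lemma mB_mem_abs {m : ℕ} {S : Fin m → Finset ℤ} {j : Fin m}
    (h : (S j).Nonempty) : ∃ x ∈ S j, mB S j = |x| := by
  have hne : ((S j).image (fun x => |x|)).Nonempty := h.image _
  obtain ⟨a, ha⟩ := Finset.min_of_nonempty hne
  have := Finset.mem_of_min ha
  obtain ⟨x, hx, rfl⟩ := Finset.mem_image.mp this
  exact ⟨x, hx, by unfold mB; rw [ha]; rfl⟩

set_option maxHeartbeats 1600000 in
/-- lob_{B'}(π) = k for every standard type B partition π. -/
theorem stmt6 (n k : ℕ) (S : Fin (2*k+1) → Finset ℤ) (hS : IsStandardB n k S) :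
    lobB' S = k := by
  obtain ⟨⟨hne, hdisj, hcov, h0, hnegS0, hpair⟩, hmin_mem, hchain⟩ := hS
  -- m₀ = 0
  have hm0 : mB S 0 = 0 := by
    have h1 : mB S 0 ≤ 0 := by simpa using mB_le_abs h0
    exact le_antisymm h1 (mB_nonneg S 0)
  -- m_{2ℓ-1} = m_{2ℓ}
  have hodd : ∀ i : ℕ, 1 ≤ i → ∀ h : 2*i < 2*k+1,
      mB S ⟨2*i-1, by omega⟩ = mB S ⟨2*i, h⟩ := by
    intro i h1 h
    have heq := hpair i h1 h
    unfold mB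
    rw [heq, Finset.image_image]
    have hc : ((fun x : ℤ => |x|) ∘ (fun x : ℤ => -x)) = fun x : ℤ => |x| := by
      funext y; simp [abs_neg]
    rw [hc]
  -- chain: strictly increasing mins on even blocks
  have hchain' : ∀ b : ℕ, ∀ a : ℕ, ∀ _hab : a < b, ∀ hb : 2*b < 2*k+1,
      mB S ⟨2*a, by omega⟩ < mB S ⟨2*b, hb⟩ := by
    intro b
    induction b with
    | zero => omega
    | succ c ih =>
      intro a ha hb
      have hc := hchain c (by omega)
      rcases Nat.lt_succ_iff_lt_or_eq.mp ha with h' | h'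
      · exact lt_trans (ih a h' (by omega)) hc
      · subst h'; exact hc
  -- m_{2ℓ} > 0 for ℓ ≥ 1
  have hpos : ∀ ℓ : ℕ, 1 ≤ ℓ → ∀ h : 2*ℓ < 2*k+1, 0 < mB S ⟨2*ℓ, h⟩ := by
    intro ℓ h1 h
    have := hchain' ℓ 0 (by omega) h
    rw [show (⟨2*0, by omega⟩ : Fin (2*k+1)) = 0 from Fin.ext (by simp only [Fin.val_mk, Fin.val_zero]),
      hm0] at this
    exact this
  -- general index reduction: mB S i = mB S ⟨2*((i+1)/2)⟩
  have hceil : ∀ i : Fin (2*k+1), ∀ h : 2*((i.val+1)/2) < 2*k+1,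
      mB S i = mB S ⟨2*((i.val+1)/2), h⟩ := by
    intro i h
    rcases Nat.even_or_odd i.val with ⟨t, ht⟩ | ⟨t, ht⟩
    · congr 1; exact Fin.ext (by simp only [Fin.val_mk]; omega)
    · have h2 : 2*(t+1) < 2*k+1 := by have := i.isLt; omega
      have := hodd (t+1) (by omega) h2
      have e1 : mB S i = mB S ⟨2*(t+1)-1, by omega⟩ :=
        congrArg (mB S) (Fin.ext (by simp only [Fin.val_mk]; omega))
      have e2 : mB S ⟨2*((i.val+1)/2), h⟩ = mB S ⟨2*(t+1), h2⟩ :=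
        congrArg (mB S) (Fin.ext (by simp only [Fin.val_mk]; omega))
      rw [e1, e2]; exact this
  -- describe the set as a finite image
  have f_def : ∀ ℓ : Fin k, 2*ℓ.val+2 < 2*k+1 := fun ℓ => by omega
  set f : Fin k → ℤ × Fin (2*k+1) :=
    fun ℓ => (mB S ⟨2*ℓ.val+2, by omega⟩, ⟨2*ℓ.val+1, by omega⟩) with hf
  have hset : {p : ℤ × Fin (2*k+1) | (∃ i, p.2 < i ∧ p.1 ∈ S i) ∧ 0 < p.1 ∧ p.1 ≤ mB S p.2}
      = ↑(Finset.image f Finset.univ) := by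
    ext ⟨s, j⟩
    simp only [Set.mem_setOf_eq, Finset.coe_image, Set.mem_image, Finset.mem_coe,
      Finset.mem_image, Finset.mem_univ, true_and, Finset.coe_univ, Set.mem_univ]
    constructor
    · rintro ⟨⟨i, hij, hsi⟩, hs0, hsm⟩
      have hmi : mB S i ≤ s := by
        have := mB_le_abs hsi
        rwa [abs_of_pos hs0] at this
      have hjlt := j.isLt
      have hilt := i.isLt
      have hijv := Fin.lt_iff_val_lt_val.mp hij
      have hha : 2*((j.val+1)/2) < 2*k+1 := by omega
      have hhb : 2*((i.val+1)/2) < 2*k+1 := by omega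
      have hja := hceil j hha
      have hib := hceil i hhb
      have hab : (j.val+1)/2 = (i.val+1)/2 := by
        by_contra hne
        have hlt : (j.val+1)/2 < (i.val+1)/2 := by omega
        have hcc := hchain' ((i.val+1)/2) ((j.val+1)/2) hlt hhb
        have e : mB S ⟨2*((j.val+1)/2), by omega⟩ = mB S ⟨2*((j.val+1)/2), hha⟩ := rfl
        rw [e] at hcc
        omega
      have heab : mB S ⟨2*((j.val+1)/2), hha⟩ = mB S ⟨2*((i.val+1)/2), hhb⟩ :=
        congrArg (mB S) (Fin.ext (by simp only [Fin.val_mk]; omega))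
      have hs_eq : s = mB S ⟨2*((j.val+1)/2), hha⟩ := by omega
      have ha1 : 1 ≤ (j.val+1)/2 := by
        by_contra hle
        have : j.val = 0 := by omega
        have : i.val = 0 := by omega
        omega
      have hj1 : j.val = 2*((j.val+1)/2) - 1 := by omega
      have hak : (j.val+1)/2 - 1 < k := by omega
      refine ⟨⟨(j.val+1)/2 - 1, hak⟩, ?_⟩
      simp only [hf]
      have e1 : mB S ⟨2*((⟨(j.val+1)/2 - 1, hak⟩ : Fin k)).val+2, by omega⟩
          = mB S ⟨2*((j.val+1)/2), hha⟩ :=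
        congrArg (mB S) (Fin.ext (by simp only [Fin.val_mk]; omega))
      have e2 : (⟨2*((⟨(j.val+1)/2 - 1, hak⟩ : Fin k)).val+1, by omega⟩ : Fin (2*k+1)) = j :=
        Fin.ext (by simp only [Fin.val_mk]; omega)
      rw [Prod.mk.injEq]
      exact ⟨by rw [e1, ← hs_eq], e2⟩
    · rintro ⟨ℓ, hℓ⟩
      simp only [hf] at hℓ
      have hs : s = mB S ⟨2*ℓ.val+2, by omega⟩ := by
        have := congrArg Prod.fst hℓ; simpa using this.symm
      have hj : j = ⟨2*ℓ.val+1, by omega⟩ := by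
        have := congrArg Prod.snd hℓ; simpa using this.symm
      have h2 : 2*(ℓ.val+1) < 2*k+1 := by omega
      have hmem : mB S ⟨2*(ℓ.val+1), h2⟩ ∈ S ⟨2*(ℓ.val+1), h2⟩ :=
        hmin_mem (ℓ.val+1) (by omega) h2
      have epp : (⟨2*(ℓ.val+1), h2⟩ : Fin (2*k+1)) = ⟨2*ℓ.val+2, by omega⟩ :=
        Fin.ext (by simp only [Fin.val_mk]; omega)
      rw [epp] at hmem
      have hposℓ : 0 < mB S ⟨2*ℓ.val+2, by omega⟩ := by
        have := hpos (ℓ.val+1) (by omega) h2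
        rwa [epp] at this
      have hoddℓ := hodd (ℓ.val+1) (by omega) h2
      have e3 : mB S ⟨2*(ℓ.val+1)-1, by omega⟩ = mB S ⟨2*ℓ.val+1, by omega⟩ :=
        congrArg (mB S) (Fin.ext (by simp only [Fin.val_mk]; omega))
      have e4 : mB S ⟨2*(ℓ.val+1), h2⟩ = mB S ⟨2*ℓ.val+2, by omega⟩ :=
        congrArg (mB S) epp
      have hodd' : mB S ⟨2*ℓ.val+1, by omega⟩ = mB S ⟨2*ℓ.val+2, by omega⟩ :=
        e3.symm.trans (hoddℓ.trans e4)
      subst hs hj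
      refine ⟨⟨⟨2*ℓ.val+2, by omega⟩, ?_, hmem⟩, hposℓ, hodd'.ge⟩
      exact Fin.lt_iff_val_lt_val.mpr (by simp only [Fin.val_mk]; omega)
  unfold lobB'
  rw [hset, Set.ncard_coe_finset,
    Finset.card_image_of_injective _ ?_, Finset.card_univ, Fintype.card_fin]
  intro a b hab
  simp only [hf, Prod.mk.injEq, Fin.mk.injEq] at hab
  exact Fin.ext (by omega)
end
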